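/- arXiv:2412.00116 — 14 statements merged into one kernel-verified Lean document; each statement's English description precedes it below -/
import Mathlib

section
/- Let σ = (σ_1 < ... < σ_k) and τ = (τ_1 < ... < τ_ℓ) be strictly increasing tuples of positive integers with k < ℓ, and set σ_0 = 0. Let m = max{1 ≤ i ≤ k+1 : σ_{i−1} < τ_i}. Then the tuples σ̄ and τ̄ defined by σ̄_i = σ_i for i < m, σ̄_i = τ_i for m ≤ i ≤ ℓ, and τ̄_i = τ_i for i < m, τ̄_i = σ_i for m ≤ i ≤ k, are both strictly increasing. -/
namespace Stmt3

/-- Elementary splice: given column tuples `σ = (σ_1 < ... < σ_k)` and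
`τ = (τ_1 < ... < τ_ℓ)` of positive integers with `k < ℓ`, with the convention
`σ_0 = 0`, and `m = max {1 ≤ i ≤ k+1 : σ_{i−1} < τ_i}`, the spliced tuples
`σ̄` (with `σ̄_i = σ_i` for `i < m`, `τ_i` for `m ≤ i ≤ ℓ`) and
`τ̄` (with `τ̄_i = τ_i` for `i < m`, `σ_i` for `m ≤ i ≤ k`) are both strictly
increasing. -/
theorem stmt3 (k ℓ m : ℕ) (σ τ : ℕ → ℕ) (hkl : k < ℓ)
    (hσ0 : σ 0 = 0)
    (hσmono : ∀ i, 1 ≤ i → i < k → σ i < σ (i + 1))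
    (hσpos : ∀ i, 1 ≤ i → i ≤ k → 0 < σ i)
    (hτmono : ∀ i, 1 ≤ i → i < ℓ → τ i < τ (i + 1))
    (hτpos : ∀ i, 1 ≤ i → i ≤ ℓ → 0 < τ i)
    (hm : 1 ≤ m ∧ m ≤ k + 1 ∧ σ (m - 1) < τ m)
    (hmax : ∀ i, 1 ≤ i → i ≤ k + 1 → σ (i - 1) < τ i → i ≤ m) :
    (∀ i, 1 ≤ i → i < ℓ →
      (if i < m then σ i else τ i) < (if i + 1 < m then σ (i + 1) else τ (i + 1))) ∧
    (∀ i, 1 ≤ i → i < k →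
      (if i < m then τ i else σ i) < (if i + 1 < m then τ (i + 1) else σ (i + 1))) := by
  obtain ⟨hm1, hmk, hmlt⟩ := hm
  constructor
  · intro i hi1 hil
    by_cases h1 : i + 1 < m
    · have hi : i < m := by omega
      rw [if_pos hi, if_pos h1]
      exact hσmono i hi1 (by omega)
    · rw [if_neg h1]
      by_cases h2 : i < m
      · rw [if_pos h2]
        have e : i + 1 = m := by omega
        rw [e]
        have e2 : i = m - 1 := by omega
        rw [e2]; exact hmlt
      · rw [if_neg h2]
        exact hτmono i hi1 hil
  · intro i hi1 hik
    by_cases h1 : i + 1 < m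
    · have hi : i < m := by omega
      rw [if_pos hi, if_pos h1]
      exact hτmono i hi1 (by omega)
    · rw [if_neg h1]
      by_cases h2 : i < m
      · rw [if_pos h2]
        have him : i + 1 = m := by omega
        have hle : τ (m + 1) ≤ σ m := by
          by_contra h
          have := hmax (m + 1) (by omega) (by omega) (by simpa using not_le.mp h)
          omega
        have h3 : τ i < τ m := him ▸ hτmono i hi1 (by omega)
        have h4 : τ m < τ (m + 1) := hτmono m hm1 (by omega)
        rw [him]
        omega
      · rw [if_neg h2]
        exact hσmono i hi1 hik

end Stmt3
end

section
/- Let σ, τ be column tuples of lengths k < ℓ and let splice(σ,τ) = (σ̄, τ̄). Then max{1 ≤ i ≤ k+1 : σ_{i−1} < τ_i} = max{1 ≤ i ≤ k+1 : τ̄_{i−1} < σ̄_i}, and applying the splice operation to the pair (τ̄, σ̄) recovers (τ, σ). -/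
namespace Stmt5

/-- Let `σ, τ` be column tuples of lengths `k < ℓ` (with the convention of a 0-th
entry equal to `0`), `m = max {1 ≤ i ≤ k+1 : σ_{i−1} < τ_i}`, and let
`splice(σ,τ) = (σ̄, τ̄)` be defined by swapping suffixes starting at `m`.
Then `m` is also `max {1 ≤ i ≤ k+1 : τ̄_{i−1} < σ̄_i}`, and splicing the pair
`(τ̄, σ̄)` at this index recovers `(τ, σ)`. -/
theorem stmt5 (k ℓ m : ℕ) (σ τ : ℕ → ℕ) (hkl : k < ℓ)
    (hσ0 : σ 0 = 0) (hτ0 : τ 0 = 0)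
    (hσmono : ∀ i, 1 ≤ i → i < k → σ i < σ (i + 1))
    (hσpos : ∀ i, 1 ≤ i → i ≤ k → 0 < σ i)
    (hτmono : ∀ i, 1 ≤ i → i < ℓ → τ i < τ (i + 1))
    (hτpos : ∀ i, 1 ≤ i → i ≤ ℓ → 0 < τ i)
    (hm : 1 ≤ m ∧ m ≤ k + 1 ∧ σ (m - 1) < τ m)
    (hmax : ∀ i, 1 ≤ i → i ≤ k + 1 → σ (i - 1) < τ i → i ≤ m) :
    -- `m` is the maximum of `{1 ≤ i ≤ k+1 : τ̄_{i−1} < σ̄_i}`: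
    (1 ≤ m ∧ m ≤ k + 1 ∧
      (if m - 1 < m then τ (m - 1) else σ (m - 1)) < (if m < m then σ m else τ m)) ∧
    (∀ i, 1 ≤ i → i ≤ k + 1 →
      (if i - 1 < m then τ (i - 1) else σ (i - 1)) < (if i < m then σ i else τ i) →
      i ≤ m) ∧
    -- splicing `(τ̄, σ̄)` at `m` recovers `(τ, σ)`:
    (∀ i, 1 ≤ i → i ≤ ℓ →
      (if i < m then (if i < m then τ i else σ i) else (if i < m then σ i else τ i)) = τ i) ∧
    (∀ i, 1 ≤ i → i ≤ k →
      (if i < m then (if i < m then σ i else τ i) else (if i < m then τ i else σ i)) = σ i) := by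
  obtain ⟨hm1, hm2, hm3⟩ := hm
  refine ⟨⟨hm1, hm2, ?_⟩, ?_, ?_, ?_⟩
  · rw [if_pos (Nat.sub_lt (by omega) one_pos), if_neg (lt_irrefl m)]
    rcases Nat.eq_or_lt_of_le hm1 with h | h
    · rw [← h]; simpa [hτ0] using hτpos 1 le_rfl (by omega)
    · have := hτmono (m - 1) (by omega) (by omega)
      rwa [Nat.sub_add_cancel (by omega)] at this
  · intro i hi1 hi2 hcond
    by_contra h
    push_neg at h
    rw [if_neg (by omega), if_neg (by omega)] at hcond
    exact absurd (hmax i hi1 hi2 hcond) (by omega)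
  · intro i _ _; split <;> rfl
  · intro i _ _; split <;> rfl

end Stmt5
end

section
/- The splice operation on pairs of column tuples is an involution: splice∘splice is the identity map on the set of all pairs of column tuples. -/
namespace Stmt6

/-- For column tuples `σ` (length `k`) and `τ` (length `ℓ`) with `k < ℓ`, the
0-indexed splice point `m − 1`, where `m = max {1 ≤ i ≤ k+1 : σ_{i−1} < τ_i}`
(with the convention `σ_0 = 0`). -/
def spliceIdx (σ τ : List ℕ) : ℕ :=
  ((Finset.range (σ.length + 1)).filter
    (fun j => (if j = 0 then 0 else σ.getD (j - 1) 0) < τ.getD j 0)).sup id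

/-- Elementary splice for `σ` shorter than `τ`: swap the suffixes starting at the
splice point. -/
def splicePair (σ τ : List ℕ) : List ℕ × List ℕ :=
  (σ.take (spliceIdx σ τ) ++ τ.drop (spliceIdx σ τ),
   τ.take (spliceIdx σ τ) ++ σ.drop (spliceIdx σ τ))

/-- The splice operation on an arbitrary pair of column tuples: elementary splice
if the first is shorter, the swapped elementary splice if the first is longer,
and the identity if the lengths agree. -/
def splice (p : List ℕ × List ℕ) : List ℕ × List ℕ :=
  if p.1.length < p.2.length then splicePair p.1 p.2
  else if p.2.length < p.1.length then (splicePair p.2 p.1).swap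
  else p

lemma spliceIdx_le (σ τ : List ℕ) : spliceIdx σ τ ≤ σ.length := by
  apply Finset.sup_le
  intro j hj
  simp only [Finset.mem_filter, Finset.mem_range] at hj
  simp only [id_eq]
  omega

lemma splice_lt (σ τ : List ℕ) (h : σ.length < τ.length) :
    splice (σ, τ) = (σ.take (spliceIdx σ τ) ++ τ.drop (spliceIdx σ τ),
      τ.take (spliceIdx σ τ) ++ σ.drop (spliceIdx σ τ)) := by
  simp only [splice, splicePair]
  rw [if_pos h]

lemma splice_gt (σ τ : List ℕ) (h : τ.length < σ.length) :
    splice (σ, τ) = (σ.take (spliceIdx τ σ) ++ τ.drop (spliceIdx τ σ),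
      τ.take (spliceIdx τ σ) ++ σ.drop (spliceIdx τ σ)) := by
  simp only [splice, splicePair]
  rw [if_neg (by omega), if_pos h]
  rfl

/-- Key lemma: splicing twice (in the short-long order) restores the pair. -/
lemma key (σ τ : List ℕ) (hτ : τ.Pairwise (· < ·)) (hτpos : ∀ x ∈ τ, 0 < x)
    (hlen : σ.length < τ.length) :
    splicePair (τ.take (spliceIdx σ τ) ++ σ.drop (spliceIdx σ τ))
               (σ.take (spliceIdx σ τ) ++ τ.drop (spliceIdx σ τ)) = (τ, σ) := by
  obtain ⟨m, hmeq⟩ : ∃ m, spliceIdx σ τ = m := ⟨_, rfl⟩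
  have hmle : m ≤ σ.length := hmeq ▸ spliceIdx_le σ τ
  have hmlt : m < τ.length := lt_of_le_of_lt hmle hlen
  rw [hmeq]
  have hlt1 : (τ.take m).length = m := by
    rw [List.length_take]; omega
  have hlt2 : (σ.take m).length = m := by
    rw [List.length_take]; omega
  have hlenT : (τ.take m ++ σ.drop m).length = σ.length := by
    rw [List.length_append, hlt1, List.length_drop]; omega
  -- maximality of m for the original pair
  have hmax : ∀ j, m < j → j ≤ σ.length → ¬ (σ.getD (j - 1) 0 < τ.getD j 0) := by
    intro j h1 h2 hc
    have hj0 : j ≠ 0 := by omega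
    have hmem : j ∈ (Finset.range (σ.length + 1)).filter
        (fun j => (if j = 0 then 0 else σ.getD (j - 1) 0) < τ.getD j 0) := by
      simp only [Finset.mem_filter, Finset.mem_range]
      exact ⟨by omega, by rw [if_neg hj0]; exact hc⟩
    have h3 : id j ≤ spliceIdx σ τ := Finset.le_sup (f := id) hmem
    rw [hmeq] at h3
    simp only [id_eq] at h3
    omega
  -- the new splice index equals m
  have hidx : spliceIdx (τ.take m ++ σ.drop m) (σ.take m ++ τ.drop m) = m := by
    apply le_antisymm
    · apply Finset.sup_le
      intro j hj
      simp only [Finset.mem_filter, Finset.mem_range, hlenT] at hj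
      obtain ⟨hjle, hjcond⟩ := hj
      simp only [id_eq]
      by_contra hcon
      have hjm : m < j := by omega
      have hjk : j ≤ σ.length := by omega
      have hj0 : j ≠ 0 := by omega
      rw [if_neg hj0] at hjcond
      have h1 : (τ.take m ++ σ.drop m).getD (j - 1) 0 = σ.getD (j - 1) 0 := by
        simp only [List.getD_eq_getElem?_getD]
        rw [List.getElem?_append_right (by rw [hlt1]; omega), hlt1, List.getElem?_drop,
          show m + (j - 1 - m) = j - 1 by omega]
      have h2 : (σ.take m ++ τ.drop m).getD j 0 = τ.getD j 0 := by
        simp only [List.getD_eq_getElem?_getD]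
        rw [List.getElem?_append_right (by rw [hlt2]; omega), hlt2, List.getElem?_drop,
          show m + (j - m) = j by omega]
      rw [h1, h2] at hjcond
      exact hmax j hjm hjk hjcond
    · have hmem : m ∈ (Finset.range ((τ.take m ++ σ.drop m).length + 1)).filter
          (fun j => (if j = 0 then 0 else (τ.take m ++ σ.drop m).getD (j - 1) 0)
            < (σ.take m ++ τ.drop m).getD j 0) := by
        simp only [Finset.mem_filter, Finset.mem_range, hlenT]
        refine ⟨by omega, ?_⟩
        have h2 : (σ.take m ++ τ.drop m).getD m 0 = τ.getD m 0 := by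
          simp only [List.getD_eq_getElem?_getD]
          rw [List.getElem?_append_right (by rw [hlt2]), hlt2, List.getElem?_drop,
            show m + (m - m) = m by omega]
        rw [h2]
        by_cases h0 : m = 0
        · rw [if_pos h0, h0]
          have h0lt : 0 < τ.length := by omega
          have : τ.getD 0 0 = τ[0]'h0lt := by
            simp [List.getD_eq_getElem?_getD, List.getElem?_eq_getElem h0lt]
          rw [this]
          exact hτpos _ (List.getElem_mem _)
        · rw [if_neg h0]
          have h1 : (τ.take m ++ σ.drop m).getD (m - 1) 0 = τ.getD (m - 1) 0 := by
            simp only [List.getD_eq_getElem?_getD]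
            rw [List.getElem?_append_left (by rw [hlt1]; omega),
              List.getElem?_take_of_lt (by omega)]
          rw [h1]
          have hlt : m - 1 < τ.length := by omega
          have e1 : τ.getD (m - 1) 0 = τ[m - 1]'hlt := by
            simp [List.getD_eq_getElem?_getD, List.getElem?_eq_getElem hlt]
          have e2 : τ.getD m 0 = τ[m]'hmlt := by
            simp [List.getD_eq_getElem?_getD, List.getElem?_eq_getElem hmlt]
          rw [e1, e2]
          exact hτ.rel_get_of_lt (a := ⟨m - 1, hlt⟩) (b := ⟨m, hmlt⟩)
            (by simp only [Fin.mk_lt_mk]; omega)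
      have := Finset.le_sup (f := id) hmem
      simpa [spliceIdx] using this
  simp only [splicePair, hidx]
  rw [List.take_left' hlt1, List.drop_left' hlt2, List.take_left' hlt2,
    List.drop_left' hlt1, List.take_append_drop, List.take_append_drop]

/-- Splice is an involution on pairs of column tuples (strictly increasing lists
of positive integers). -/
theorem stmt6 (σ τ : List ℕ)
    (hσ : σ.Pairwise (· < ·)) (hτ : τ.Pairwise (· < ·))
    (hσpos : ∀ x ∈ σ, 0 < x) (hτpos : ∀ x ∈ τ, 0 < x) :
    splice (splice (σ, τ)) = (σ, τ) := by
  rcases lt_trichotomy σ.length τ.length with h | h | h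
  · have hmle := spliceIdx_le σ τ
    have hk := key σ τ hτ hτpos h
    simp only [splicePair, Prod.mk.injEq] at hk
    rw [splice_lt σ τ h,
      splice_gt _ _ (by
        simp only [List.length_append, List.length_take, List.length_drop]
        omega)]
    exact Prod.ext hk.2 hk.1
  · simp [splice, h]
  · have hmle := spliceIdx_le τ σ
    have hk := key τ σ hσ hσpos h
    simp only [splicePair, Prod.mk.injEq] at hk
    rw [splice_gt σ τ h,
      splice_lt _ _ (by
        simp only [List.length_append, List.length_take, List.length_drop]
        omega)]
    exact Prod.ext hk.1 hk.2

end Stmt6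
end

section
/- Let γ be a column composition with d columns and F a column-strict filling of γ. If 1 ≤ i ≤ d−2 and some two of the column lengths γ'_i, γ'_{i+1}, γ'_{i+2} are equal, then the splice operators satisfy the braid relation S_i S_{i+1} S_i (F) = S_{i+1} S_i S_{i+1} (F). -/
namespace Stmt7

/-- 0-indexed splice point for column tuples `σ` (shorter) and `τ`. -/
def spliceIdx (σ τ : List ℕ) : ℕ :=
  ((Finset.range (σ.length + 1)).filter
    (fun j => (if j = 0 then 0 else σ.getD (j - 1) 0) < τ.getD j 0)).sup id

/-- Elementary splice for `σ` shorter than `τ`. -/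
def splicePair (σ τ : List ℕ) : List ℕ × List ℕ :=
  (σ.take (spliceIdx σ τ) ++ τ.drop (spliceIdx σ τ),
   τ.take (spliceIdx σ τ) ++ σ.drop (spliceIdx σ τ))

/-- The splice operation on an arbitrary pair of column tuples. -/
def splice (p : List ℕ × List ℕ) : List ℕ × List ℕ :=
  if p.1.length < p.2.length then splicePair p.1 p.2
  else if p.2.length < p.1.length then (splicePair p.2 p.1).swap
  else p

/-- The `i`-th splice operator (`i` 1-indexed) on a filling presented as its list
of columns (each column the list of its entries, read top to bottom): apply the
splice operation to columns `i` and `i+1`, leaving all other columns unchanged. -/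
def Sop (i : ℕ) (F : List (List ℕ)) : List (List ℕ) :=
  (F.set (i - 1) (splice (F.getD (i - 1) [], F.getD i [])).1).set i
    (splice (F.getD (i - 1) [], F.getD i [])).2

/-! ### Auxiliary lemmas about `spliceIdx` -/

lemma spliceIdx_le (σ τ : List ℕ) : spliceIdx σ τ ≤ σ.length := by
  apply Finset.sup_le
  intro j hj
  simp only [Finset.mem_filter, Finset.mem_range] at hj
  simpa using Nat.lt_succ_iff.mp hj.1

lemma spliceIdx_cond (σ τ : List ℕ) (h0 : 0 < τ.getD 0 0) :
    (if spliceIdx σ τ = 0 then 0 else σ.getD (spliceIdx σ τ - 1) 0)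
      < τ.getD (spliceIdx σ τ) 0 := by
  have hne : ((Finset.range (σ.length + 1)).filter
      (fun j => (if j = 0 then 0 else σ.getD (j - 1) 0) < τ.getD j 0)).Nonempty :=
    ⟨0, by simp only [Finset.mem_filter, Finset.mem_range]
           exact ⟨Nat.succ_pos _, by simpa using h0⟩⟩
  obtain ⟨b, hb, he⟩ := Finset.exists_mem_eq_sup' hne id
  have hbk : spliceIdx σ τ = b := by
    rw [spliceIdx, ← Finset.sup'_eq_sup hne id, he]; rfl
  rw [hbk]
  exact (Finset.mem_filter.mp hb).2

lemma spliceIdx_max (σ τ : List ℕ) (j : ℕ) (h1 : spliceIdx σ τ < j) (h2 : j ≤ σ.length) :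
    ¬ ((if j = 0 then 0 else σ.getD (j - 1) 0) < τ.getD j 0) := by
  intro hc
  have hj : j ∈ (Finset.range (σ.length + 1)).filter
      (fun j => (if j = 0 then 0 else σ.getD (j - 1) 0) < τ.getD j 0) := by
    simp only [Finset.mem_filter, Finset.mem_range]
    exact ⟨by omega, hc⟩
  have hle := Finset.le_sup (f := id) hj
  rw [spliceIdx] at h1
  simp only [id] at hle
  omega

lemma spliceIdx_eq (σ τ : List ℕ) (k : ℕ) (hk : k ≤ σ.length)
    (h1 : (if k = 0 then 0 else σ.getD (k - 1) 0) < τ.getD k 0)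
    (h2 : ∀ j, k < j → j ≤ σ.length →
      ¬ ((if j = 0 then 0 else σ.getD (j - 1) 0) < τ.getD j 0)) :
    spliceIdx σ τ = k := by
  unfold spliceIdx
  apply le_antisymm
  · apply Finset.sup_le
    intro j hj
    simp only [Finset.mem_filter, Finset.mem_range] at hj
    by_contra h
    push_neg at h
    exact h2 j (by simpa using h) (by omega) hj.2
  · exact Finset.le_sup (f := id)
      (by simp only [Finset.mem_filter, Finset.mem_range]; exact ⟨by omega, h1⟩)

/-! ### Length and identity lemmas for `splice` -/

lemma splicePair_fst_length (σ τ : List ℕ) (h : σ.length ≤ τ.length) :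
    (splicePair σ τ).1.length = τ.length := by
  have := spliceIdx_le σ τ
  simp only [splicePair, List.length_append, List.length_take, List.length_drop]
  omega

lemma splicePair_snd_length (σ τ : List ℕ) (h : σ.length ≤ τ.length) :
    (splicePair σ τ).2.length = σ.length := by
  have := spliceIdx_le σ τ
  simp only [splicePair, List.length_append, List.length_take, List.length_drop]
  omega

lemma splice_fst_length (p : List ℕ × List ℕ) : (splice p).1.length = p.2.length := by
  unfold splice
  split_ifs with h1 h2
  · exact splicePair_fst_length _ _ (by omega)
  · simpa using splicePair_snd_length _ _ (by omega)
  · omega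

lemma splice_snd_length (p : List ℕ × List ℕ) : (splice p).2.length = p.1.length := by
  unfold splice
  split_ifs with h1 h2
  · exact splicePair_snd_length _ _ (by omega)
  · simpa using splicePair_fst_length _ _ (by omega)
  · omega

lemma splice_of_length_eq (p : List ℕ × List ℕ) (h : p.1.length = p.2.length) :
    splice p = p := by
  unfold splice
  rw [if_neg (by omega), if_neg (by omega)]

/-! ### Involutivity -/

lemma getD_lt_getD_of_sorted (l : List ℕ) (h : l.Pairwise (· < ·)) (a b : ℕ)
    (hab : a < b) (hb : b < l.length) : l.getD a 0 < l.getD b 0 := by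
  rw [List.getD_eq_getElem l 0 (show a < l.length by omega),
      List.getD_eq_getElem l 0 hb]
  exact List.pairwise_iff_getElem.mp h a b (by omega) hb hab

lemma splicePair_inv (σ τ : List ℕ) (hlt : σ.length < τ.length)
    (hτ : τ.Pairwise (· < ·)) (hτpos : ∀ x ∈ τ, 1 ≤ x) :
    splicePair (splicePair σ τ).2 (splicePair σ τ).1 = (τ, σ) := by
  have h0 : 0 < τ.getD 0 0 := by
    rw [List.getD_eq_getElem τ 0 (show 0 < τ.length by omega)]
    exact hτpos _ (List.getElem_mem _)
  have hkm : spliceIdx σ τ ≤ σ.length := spliceIdx_le σ τ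
  have hcond := spliceIdx_cond σ τ h0
  have hmax := spliceIdx_max σ τ
  obtain ⟨k, hk⟩ : ∃ k, spliceIdx σ τ = k := ⟨_, rfl⟩
  rw [hk] at hkm hcond hmax
  have l1 : (σ.take k ++ τ.drop k).length = τ.length := by
    simp only [List.length_append, List.length_take, List.length_drop]; omega
  have l2 : (τ.take k ++ σ.drop k).length = σ.length := by
    simp only [List.length_append, List.length_take, List.length_drop]; omega
  have hsp : splicePair σ τ = (σ.take k ++ τ.drop k, τ.take k ++ σ.drop k) := by
    rw [splicePair, hk]
  have hidx : spliceIdx (τ.take k ++ σ.drop k) (σ.take k ++ τ.drop k) = k := by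
    apply spliceIdx_eq
    · rw [l2]; exact hkm
    · by_cases hk0 : k = 0
      · rw [hk0]
        simpa using h0
      · rw [if_neg hk0]
        have e1 : (τ.take k ++ σ.drop k).getD (k - 1) 0 = τ.getD (k - 1) 0 := by
          rw [List.getD_eq_getElem?_getD, List.getElem?_append_left (by simp only [List.length_take, List.length_append, List.length_drop]; omega),
            List.getElem?_take_of_lt (by omega), ← List.getD_eq_getElem?_getD]
        have e2 : (σ.take k ++ τ.drop k).getD k 0 = τ.getD k 0 := by
          rw [List.getD_eq_getElem?_getD, List.getElem?_append_right (by simp only [List.length_take, List.length_append, List.length_drop]; omega),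
            List.length_take]
          have h' : k - min k σ.length = 0 := by omega
          rw [h', List.getElem?_drop, Nat.add_zero]
          exact List.getD_eq_getElem?_getD.symm
        rw [e1, e2]
        exact getD_lt_getD_of_sorted τ hτ (k - 1) k (by omega) (by omega)
    · intro j hjk hjm
      rw [l2] at hjm
      rw [if_neg (by omega)]
      have e1 : (τ.take k ++ σ.drop k).getD (j - 1) 0 = σ.getD (j - 1) 0 := by
        rw [List.getD_eq_getElem?_getD, List.getElem?_append_right (by simp only [List.length_take, List.length_append, List.length_drop]; omega),
          List.length_take, List.getElem?_drop]
        have h' : k + (j - 1 - min k τ.length) = j - 1 := by omega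
        rw [h', ← List.getD_eq_getElem?_getD]
      have e2 : (σ.take k ++ τ.drop k).getD j 0 = τ.getD j 0 := by
        rw [List.getD_eq_getElem?_getD, List.getElem?_append_right (by simp only [List.length_take, List.length_append, List.length_drop]; omega),
          List.length_take, List.getElem?_drop]
        have h' : k + (j - min k σ.length) = j := by omega
        rw [h', ← List.getD_eq_getElem?_getD]
      rw [e1, e2]
      have hm := hmax j (by omega) hjm
      rwa [if_neg (by omega)] at hm
  rw [hsp, splicePair]
  simp only [hidx]
  have t1 : (τ.take k ++ σ.drop k).take k = τ.take k := by
    rw [List.take_append_of_le_length (by simp only [List.length_take, List.length_append, List.length_drop]; omega), List.take_take, min_self]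
  have t2 : (σ.take k ++ τ.drop k).drop k = τ.drop k :=
    List.drop_left' (by simp only [List.length_take, List.length_append, List.length_drop]; omega)
  have t3 : (σ.take k ++ τ.drop k).take k = σ.take k := by
    rw [List.take_append_of_le_length (by simp only [List.length_take, List.length_append, List.length_drop]; omega), List.take_take, min_self]
  have t4 : (τ.take k ++ σ.drop k).drop k = σ.drop k :=
    List.drop_left' (by simp only [List.length_take, List.length_append, List.length_drop]; omega)
  rw [t1, t2, t3, t4, List.take_append_drop, List.take_append_drop]

lemma splice_splice (σ τ : List ℕ) (hσ : σ.Pairwise (· < ·)) (hτ : τ.Pairwise (· < ·))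
    (hσpos : ∀ x ∈ σ, 1 ≤ x) (hτpos : ∀ x ∈ τ, 1 ≤ x) :
    splice (splice (σ, τ)) = (σ, τ) := by
  rcases lt_trichotomy σ.length τ.length with h | h | h
  · have e1 : splice (σ, τ) = splicePair σ τ := by
      rw [splice, if_pos h]
    have hL1 : (splicePair σ τ).1.length = τ.length := splicePair_fst_length _ _ h.le
    have hL2 : (splicePair σ τ).2.length = σ.length := splicePair_snd_length _ _ h.le
    rw [e1, splice, if_neg (by omega), if_pos (by omega)]
    rw [splicePair_inv σ τ h hτ hτpos]
    rfl
  · have h1 : (σ, τ).1.length = (σ, τ).2.length := h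
    rw [splice_of_length_eq _ h1, splice_of_length_eq _ h1]
  · have e1 : splice (σ, τ) = ((splicePair τ σ).2, (splicePair τ σ).1) := by
      rw [splice, if_neg (by simp only []; omega), if_pos h]
      rfl
    have hL1 : ((splicePair τ σ).2, (splicePair τ σ).1).1.length = τ.length :=
      splicePair_snd_length τ σ h.le
    have hL2 : ((splicePair τ σ).2, (splicePair τ σ).1).2.length = σ.length :=
      splicePair_fst_length τ σ h.le
    rw [e1, splice, if_pos (by omega)]
    exact splicePair_inv τ σ h hσ hσpos

/-! ### The operator on decomposed lists -/

lemma getD_append_self (P : List (List ℕ)) (A : List ℕ) (Q : List (List ℕ)) :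
    (P ++ A :: Q).getD P.length [] = A := by
  induction P with
  | nil => rfl
  | cons x P ih => simpa using ih

lemma Sop_app (P : List (List ℕ)) (A B : List ℕ) (Q : List (List ℕ)) :
    Sop (P.length + 1) (P ++ A :: B :: Q) =
      P ++ (splice (A, B)).1 :: (splice (A, B)).2 :: Q := by
  induction P with
  | nil => simp [Sop]
  | cons x P ih =>
    simp only [List.cons_append, List.length_cons, Sop, Nat.add_sub_cancel,
      List.getD_cons_succ, List.set_cons_succ] at ih ⊢
    rw [ih]


lemma splice_pair_of_length_eq (X Y : List ℕ) (h : X.length = Y.length) :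
    splice (X, Y) = (X, Y) := splice_of_length_eq (X, Y) h

lemma splice_pair_fst_length (X Y : List ℕ) : (splice (X, Y)).1.length = Y.length :=
  splice_fst_length (X, Y)

lemma splice_pair_snd_length (X Y : List ℕ) : (splice (X, Y)).2.length = X.length :=
  splice_snd_length (X, Y)

/-- If `F` is a column-strict filling of a column composition with `d` columns,
`1 ≤ i ≤ d − 2`, and some two of the column lengths `γ'_i, γ'_{i+1}, γ'_{i+2}`
are equal, then the braid relation `S_i S_{i+1} S_i F = S_{i+1} S_i S_{i+1} F`
holds. -/
theorem stmt7 (n d i : ℕ) (F : List (List ℕ))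
    (hd : F.length = d)
    (hcols : ∀ col ∈ F, col.Pairwise (· < ·) ∧ ∀ x ∈ col, 1 ≤ x ∧ x ≤ n)
    (hi1 : 1 ≤ i) (hi2 : i ≤ d - 2)
    (heq : (F.getD (i - 1) []).length = (F.getD i []).length ∨
           (F.getD i []).length = (F.getD (i + 1) []).length ∨
           (F.getD (i - 1) []).length = (F.getD (i + 1) []).length) :
    Sop i (Sop (i + 1) (Sop i F)) = Sop (i + 1) (Sop i (Sop (i + 1) F)) := by
  have hlen : i + 1 < F.length := by omega
  have h3 : 3 ≤ (F.drop (i - 1)).length := by rw [List.length_drop]; omega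
  obtain ⟨A, B, C, Q, hR⟩ : ∃ A B C Q, F.drop (i - 1) = A :: B :: C :: Q := by
    rcases hD : F.drop (i - 1) with _ | ⟨A, R1⟩
    · rw [hD] at h3; simp at h3
    rcases R1 with _ | ⟨B, R2⟩
    · rw [hD] at h3; simp at h3
    rcases R2 with _ | ⟨C, Q⟩
    · rw [hD] at h3; simp at h3
    exact ⟨A, B, C, Q, rfl⟩
  obtain ⟨P, hPdef⟩ : ∃ P, F.take (i - 1) = P := ⟨_, rfl⟩
  have hF : F = P ++ A :: B :: C :: Q := by rw [← hPdef, ← hR, List.take_append_drop]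
  have hPl : P.length = i - 1 := by rw [← hPdef, List.length_take]; omega
  -- column conditions
  obtain ⟨hAs, hApos⟩ := hcols A (by rw [hF]; simp)
  obtain ⟨hBs, hBpos⟩ := hcols B (by rw [hF]; simp)
  obtain ⟨hCs, hCpos⟩ := hcols C (by rw [hF]; simp)
  have hApos' : ∀ x ∈ A, 1 ≤ x := fun x hx => (hApos x hx).1
  have hBpos' : ∀ x ∈ B, 1 ≤ x := fun x hx => (hBpos x hx).1
  have hCpos' : ∀ x ∈ C, 1 ≤ x := fun x hx => (hCpos x hx).1
  -- identify the three columns in `heq`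
  have gA : F.getD (i - 1) [] = A := by
    rw [hF, ← hPl]; exact getD_append_self P A _
  have gB : F.getD i [] = B := by
    rw [hF, List.append_cons]
    have hl : (P ++ [A]).length = i := by simp only [List.length_append, List.length_cons, List.length_nil]; omega
    rw [← hl]; exact getD_append_self _ B _
  have gC : F.getD (i + 1) [] = C := by
    rw [hF, List.append_cons, List.append_cons (P ++ [A])]
    have hl : ((P ++ [A]) ++ [B]).length = i + 1 := by
      simp only [List.length_append, List.length_cons, List.length_nil]; omega
    rw [← hl]; exact getD_append_self _ C _
  rw [gA, gB, gC] at heq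
  -- how the operators act on the decomposition
  have SA : ∀ X Y (Z : List (List ℕ)), Sop i (P ++ X :: Y :: Z) =
      P ++ (splice (X, Y)).1 :: (splice (X, Y)).2 :: Z := by
    intro X Y Z
    have h' : i = P.length + 1 := by omega
    rw [h', Sop_app]
  have SB : ∀ X Y Z (W : List (List ℕ)), Sop (i + 1) (P ++ X :: Y :: Z :: W) =
      P ++ X :: (splice (Y, Z)).1 :: (splice (Y, Z)).2 :: W := by
    intro X Y Z W
    have h1 : P ++ X :: Y :: Z :: W = (P ++ [X]) ++ Y :: Z :: W := by simp
    have h2 : i + 1 = (P ++ [X]).length + 1 := by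
      simp only [List.length_append, List.length_cons, List.length_nil]; omega
    rw [h1, h2, Sop_app]
    simp
  rw [hF]
  rw [SA A B (C :: Q)]
  rw [SB (splice (A, B)).1 (splice (A, B)).2 C Q]
  rw [SA (splice (A, B)).1 (splice ((splice (A, B)).2, C)).1
    ((splice ((splice (A, B)).2, C)).2 :: Q)]
  rw [SB A B C Q]
  rw [SA A (splice (B, C)).1 ((splice (B, C)).2 :: Q)]
  rw [SB (splice (A, (splice (B, C)).1)).1 (splice (A, (splice (B, C)).1)).2
    (splice (B, C)).2 Q]
  apply congrArg
  rcases heq with hab | hbc | hac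
  · have e1 := splice_pair_of_length_eq A B hab
    have e2 := splice_pair_of_length_eq (splice (A, (splice (B, C)).1)).2 (splice (B, C)).2
      (by rw [splice_pair_snd_length, splice_pair_snd_length]; exact hab)
    simp only [e1, e2]
  · have e1 := splice_pair_of_length_eq B C hbc
    have e2 := splice_pair_of_length_eq (splice (A, B)).1 (splice ((splice (A, B)).2, C)).1
      (by rw [splice_pair_fst_length, splice_pair_fst_length]; exact hbc)
    simp only [e1, e2]
  · have e1 := splice_pair_of_length_eq (splice (A, B)).2 C
      (by rw [splice_pair_snd_length]; exact hac)
    have e2 : splice ((splice (A, B)).1, (splice (A, B)).2) = (A, B) :=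
      splice_splice A B hAs hBs hApos' hBpos'
    have e3 := splice_pair_of_length_eq A (splice (B, C)).1
      (by rw [splice_pair_fst_length]; exact hac)
    have e4 : splice ((splice (B, C)).1, (splice (B, C)).2) = (B, C) :=
      splice_splice B C hBs hCs hBpos' hCpos'
    simp only [e1, e2, e3, e4]

end Stmt7
end

section
/- If F is a column-strict filling of partition shape λ with entries in [n], then the row-sorted filling rsort(F), obtained by sorting the entries of each row of F in weakly increasing order from left to right, is a semistandard Young tableau of shape λ. -/
namespace Stmt9

def sortRow (r : List ℕ) : List ℕ := r.mergeSort (fun a b => decide (a ≤ b))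

def rsort (F : List (List ℕ)) : List (List ℕ) := F.map sortRow

lemma sortRow_perm (r : List ℕ) : (sortRow r).Perm r := List.mergeSort_perm r _

lemma sortRow_length (r : List ℕ) : (sortRow r).length = r.length :=
  List.length_mergeSort r

lemma sortRow_sorted (r : List ℕ) : (sortRow r).Pairwise (· ≤ ·) := by
  have h := List.pairwise_mergeSort (le := fun a b : ℕ => decide (a ≤ b))
    (fun a b c hab hbc => by simp_all; omega)
    (fun a b => by simp [Bool.or_eq_true]; omega) r
  simp only [decide_eq_true_eq] at h
  exact h

lemma sorted_getD_mono {l : List ℕ} (hs : l.Pairwise (· ≤ ·)) {i j : ℕ}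
    (hij : i ≤ j) (hj : j < l.length) : l.getD i 0 ≤ l.getD j 0 := by
  have hi : i < l.length := lt_of_le_of_lt hij hj
  rw [List.getD_eq_getElem _ _ hi, List.getD_eq_getElem _ _ hj]
  rcases eq_or_lt_of_le hij with rfl | h
  · exact le_refl _
  · exact hs.rel_get_of_lt (a := ⟨i, hi⟩) (b := ⟨j, hj⟩) h

/-- In a sorted list, at least `j+1` elements are `≤` the `j`-th element. -/
lemma le_countP_of_sorted {l : List ℕ} (hs : l.Pairwise (· ≤ ·)) {j : ℕ} (hj : j < l.length) :
    j + 1 ≤ l.countP (fun x => decide (x ≤ l.getD j 0)) := by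
  have hsplit : l.countP (fun x => decide (x ≤ l.getD j 0)) =
      (l.take (j+1)).countP (fun x => decide (x ≤ l.getD j 0)) +
      (l.drop (j+1)).countP (fun x => decide (x ≤ l.getD j 0)) := by
    have h := List.countP_append (p := fun x => decide (x ≤ l.getD j 0)) (l₁ := l.take (j+1)) (l₂ := l.drop (j+1))
    rw [List.take_append_drop] at h
    exact h
  have htake : (l.take (j+1)).countP (fun x => decide (x ≤ l.getD j 0)) = (l.take (j+1)).length := by
    rw [List.countP_eq_length]
    intro a ha
    obtain ⟨i, hi, rfl⟩ := List.mem_take_iff_getElem.1 ha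
    have hi' : i < l.length := lt_of_lt_of_le hi (min_le_right _ _)
    have hij : i ≤ j := by omega
    have h := sorted_getD_mono hs hij hj
    rw [List.getD_eq_getElem _ _ hi'] at h
    simpa using h
  have hlen : (l.take (j+1)).length = j + 1 := by
    rw [List.length_take]; omega
  omega

/-- If a sorted list has at least `j+1` elements `< v`, its `j`-th element is `< v`. -/
lemma getD_lt_of_countP {l : List ℕ} (hs : l.Pairwise (· ≤ ·)) {j : ℕ} (hj : j < l.length)
    {v : ℕ} (hc : j + 1 ≤ l.countP (fun x => decide (x < v))) : l.getD j 0 < v := by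
  by_contra hcon
  push_neg at hcon
  rw [List.getD_eq_getElem _ _ hj] at hcon
  have hsplit : l.countP (fun x => decide (x < v)) =
      (l.take j).countP (fun x => decide (x < v)) +
      (l.drop j).countP (fun x => decide (x < v)) := by
    have h := List.countP_append (p := fun x => decide (x < v)) (l₁ := l.take j) (l₂ := l.drop j)
    rw [List.take_append_drop] at h
    exact h
  have hdrop : (l.drop j).countP (fun x => decide (x < v)) = 0 := by
    rw [List.countP_eq_zero]
    intro a ha
    obtain ⟨i, hi, rfl⟩ := List.mem_iff_getElem.1 ha
    rw [List.getElem_drop]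
    have hji : j + i < l.length := by
      rw [List.length_drop] at hi; omega
    have := sorted_getD_mono hs (Nat.le_add_right j i) hji
    rw [List.getD_eq_getElem _ _ hj, List.getD_eq_getElem _ _ hji] at this
    simp only [decide_eq_true_eq, not_lt]
    omega
  have htake : (l.take j).countP (fun x => decide (x < v)) ≤ j := by
    calc _ ≤ (l.take j).length := List.countP_le_length
    _ ≤ j := by rw [List.length_take]; omega
  omega

/-- positional counting transfer -/
lemma countP_le_countP (P Q : ℕ → Bool) :
    ∀ (b a : List ℕ), b.length ≤ a.length →
    (∀ i, i < b.length → P (b.getD i 0) = true → Q (a.getD i 0) = true) →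
    b.countP P ≤ a.countP Q := by
  intro b
  induction b with
  | nil => intro a _ _; simp
  | cons y ys ih =>
    intro a hlen hpos
    cases a with
    | nil => simp at hlen
    | cons x xs =>
      have h1 : ys.countP P ≤ xs.countP Q := by
        apply ih
        · simpa using hlen
        · intro i hi hP
          exact hpos (i+1) (by simpa using Nat.succ_lt_succ hi) (by simpa using hP)
      rw [List.countP_cons, List.countP_cons]
      by_cases hy : P y = true
      · have hx : Q x = true := hpos 0 (by simp) (by simpa using hy)
        simp [hy, hx]; omega
      · simp only [Bool.not_eq_true] at hy
        simp [hy]; omega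

/-- If `F` is a column-strict filling of partition shape with entries in `[n]`,
then `rsort(F)` is a semistandard Young tableau: its rows are weakly increasing
and its columns are strictly increasing. -/
theorem stmt9 (n : ℕ) (F : List (List ℕ))
    (hshape : ∀ i, i + 1 < F.length → (F.getD (i + 1) []).length ≤ (F.getD i []).length)
    (hentries : ∀ r ∈ F, ∀ x ∈ r, 1 ≤ x ∧ x ≤ n)
    (hcs : ∀ i j, i + 1 < F.length → j < (F.getD (i + 1) []).length →
      (F.getD i []).getD j 0 < (F.getD (i + 1) []).getD j 0) :
    (∀ r ∈ rsort F, r.Pairwise (· ≤ ·)) ∧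
    (∀ i j, i + 1 < F.length → j < (F.getD (i + 1) []).length →
      ((rsort F).getD i []).getD j 0 < ((rsort F).getD (i + 1) []).getD j 0) := by
  have hnil : sortRow [] = [] := by simp [sortRow]
  have hgetD : ∀ i, (rsort F).getD i [] = sortRow (F.getD i []) := by
    intro i
    have := List.getD_map F [] (n := i) sortRow
    rwa [hnil] at this
  constructor
  · intro r hr
    simp only [rsort, List.mem_map] at hr
    obtain ⟨s, _, rfl⟩ := hr
    exact sortRow_sorted s
  · intro i j hi hj
    set a := F.getD i [] with ha
    set b := F.getD (i+1) [] with hb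
    rw [hgetD i, hgetD (i+1)]
    have hba : b.length ≤ a.length := hshape i hi
    have hjb' : j < (sortRow b).length := by rw [sortRow_length]; exact hj
    set v := (sortRow b).getD j 0 with hv
    -- at least j+1 elements of b are ≤ v
    have h1 : j + 1 ≤ b.countP (fun x => decide (x ≤ v)) := by
      have := le_countP_of_sorted (sortRow_sorted b) hjb'
      rwa [(sortRow_perm b).countP_eq] at this
    -- hence at least j+1 elements of a are < v
    have h2 : j + 1 ≤ a.countP (fun x => decide (x < v)) := by
      refine le_trans h1 (countP_le_countP _ _ b a hba ?_)
      intro k hk hP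
      simp only [decide_eq_true_eq] at hP ⊢
      have hck : a.getD k 0 < b.getD k 0 := hcs i k hi hk
      omega
    have h3 : a.countP (fun x => decide (x < v)) = (sortRow a).countP (fun x => decide (x < v)) :=
      ((sortRow_perm a).countP_eq _).symm
    rw [h3] at h2
    exact getD_lt_of_countP (sortRow_sorted a) (by rw [sortRow_length]; omega) h2

end Stmt9
end

section
/- For a column-strict filling F of partition shape λ with entries in [n], inv(F) = refinv(F), where refinv(F) is the number of triples (x, y, z) of cells in the augmented diagram of λ with x, z ∈ dg(λ) in the same row, z strictly to the left of x, y the cell directly below x, and F(x) < F(z) < F(y) (setting F(y) = ∞ if y lies outside dg(λ)). -/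
namespace Stmt11

/-- The descent set of a filling `F` of `μ`. -/
def Des (μ : YoungDiagram) (F : ℕ × ℕ → ℕ) : Finset (ℕ × ℕ) :=
  μ.cells.filter (fun c => 1 ≤ c.1 ∧ F (c.1 - 1, c.2) < F c)

/-- `arm(c)` = number of cells of `μ` strictly to the right of `c` in its row. -/
def arm (μ : YoungDiagram) (c : ℕ × ℕ) : ℕ := μ.rowLen c.1 - c.2 - 1

/-- Inversions of `F`: pairs `(u, v)` with `u` Inv-attacking `v` (`u` strictly to
the left of `v` in the same row, or `u` in the row just below `v` in a strictly
later column) and `F u > F v`. -/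
def InvSet (μ : YoungDiagram) (F : ℕ × ℕ → ℕ) : Finset ((ℕ × ℕ) × (ℕ × ℕ)) :=
  (μ.cells ×ˢ μ.cells).filter (fun p =>
    ((p.1.1 = p.2.1 ∧ p.1.2 < p.2.2) ∨ (p.1.1 = p.2.1 + 1 ∧ p.2.2 < p.1.2)) ∧
    F p.2 < F p.1)

/-- Refinv-triples of `F`, recorded as the pair `(x, z)`: `x, z` in the same row
of `μ`, `z` strictly to the left of `x`, and `F x < F z < F y` where `y` is the
cell directly below `x` in the augmented diagram (`F y = ∞` if `y ∉ μ`). -/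
def RefinvSet (μ : YoungDiagram) (F : ℕ × ℕ → ℕ) : Finset ((ℕ × ℕ) × (ℕ × ℕ)) :=
  (μ.cells ×ˢ μ.cells).filter (fun p =>
    p.1.1 = p.2.1 ∧ p.2.2 < p.1.2 ∧ F p.1 < F p.2 ∧
    ((p.1.1 + 1, p.1.2) ∈ μ.cells → F p.2 < F (p.1.1 + 1, p.1.2)))

/-- The common index set: pairs `(x, z)` in the same row of `μ` with `z`
strictly to the left of `x`. -/
def T (μ : YoungDiagram) : Finset ((ℕ × ℕ) × (ℕ × ℕ)) :=
  (μ.cells ×ˢ μ.cells).filter (fun p => p.1.1 = p.2.1 ∧ p.2.2 < p.1.2)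

lemma mem_T {μ : YoungDiagram} {p : (ℕ × ℕ) × (ℕ × ℕ)} :
    p ∈ T μ ↔ p.1 ∈ μ.cells ∧ p.2 ∈ μ.cells ∧ p.1.1 = p.2.1 ∧ p.2.2 < p.1.2 := by
  simp [T, Finset.mem_filter, Finset.mem_product, and_assoc]

lemma cells_up {μ : YoungDiagram} {i i' j : ℕ} (h : (i, j) ∈ μ.cells) (hi : i' ≤ i) :
    (i', j) ∈ μ.cells := by
  rw [YoungDiagram.mem_cells] at h ⊢; exact μ.up_left_mem hi le_rfl h

lemma cells_left {μ : YoungDiagram} {i j j' : ℕ} (h : (i, j) ∈ μ.cells) (hj : j' ≤ j) :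
    (i, j') ∈ μ.cells := by
  rw [YoungDiagram.mem_cells] at h ⊢; exact μ.up_left_mem le_rfl hj h

lemma inv_card (μ : YoungDiagram) (F : ℕ × ℕ → ℕ) :
    (InvSet μ F).card =
      ((T μ).filter (fun p => F p.1 < F p.2)).card +
      ((T μ).filter (fun p =>
        (p.1.1 + 1, p.1.2) ∈ μ.cells ∧ F p.2 < F (p.1.1 + 1, p.1.2))).card := by
  have hsplit : InvSet μ F =
      ((μ.cells ×ˢ μ.cells).filter
        (fun p => (p.1.1 = p.2.1 ∧ p.1.2 < p.2.2) ∧ F p.2 < F p.1)) ∪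
      ((μ.cells ×ˢ μ.cells).filter
        (fun p => (p.1.1 = p.2.1 + 1 ∧ p.2.2 < p.1.2) ∧ F p.2 < F p.1)) := by
    rw [InvSet, ← Finset.filter_or]
    exact Finset.filter_congr (fun p _ => by tauto)
  have hdisj : Disjoint
      ((μ.cells ×ˢ μ.cells).filter
        (fun p => (p.1.1 = p.2.1 ∧ p.1.2 < p.2.2) ∧ F p.2 < F p.1))
      ((μ.cells ×ˢ μ.cells).filter
        (fun p => (p.1.1 = p.2.1 + 1 ∧ p.2.2 < p.1.2) ∧ F p.2 < F p.1)) := by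
    rw [Finset.disjoint_left]
    intro p hp hq
    simp only [Finset.mem_filter] at hp hq
    omega
  rw [hsplit, Finset.card_union_of_disjoint hdisj]
  congr 1
  · apply Finset.card_nbij' Prod.swap Prod.swap
    · rintro ⟨⟨a, b⟩, ⟨c, d⟩⟩ hp
      simp only [Finset.mem_coe, Finset.mem_filter, Finset.mem_product, Prod.swap] at hp ⊢
      simp only [Finset.mem_coe, mem_T]
      obtain ⟨⟨h1, h2⟩, ⟨h3, h4⟩, h5⟩ := hp
      exact ⟨⟨h2, h1, h3.symm, h4⟩, h5⟩
    · rintro ⟨⟨a, b⟩, ⟨c, d⟩⟩ hp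
      simp only [Finset.mem_coe, Finset.mem_filter, mem_T, Finset.mem_product, Prod.swap] at hp ⊢
      obtain ⟨⟨h1, h2, h3, h4⟩, h5⟩ := hp
      exact ⟨⟨h2, h1⟩, ⟨h3.symm, h4⟩, h5⟩
    · intro p _; exact Prod.swap_swap p
    · intro p _; exact Prod.swap_swap p
  · apply Finset.card_nbij' (fun p => ((p.2.1, p.1.2), p.2))
      (fun p => ((p.1.1 + 1, p.1.2), p.2))
    · rintro ⟨⟨a, b⟩, ⟨c, d⟩⟩ hp
      simp only [Finset.mem_coe, Finset.mem_filter, Finset.mem_product] at hp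
      obtain ⟨⟨h1, h2⟩, ⟨h3, h4⟩, h5⟩ := hp
      simp only [Finset.mem_coe, Finset.mem_filter, mem_T]
      have hcb : (c, b) ∈ μ.cells := cells_up h1 (by omega)
      subst h3
      exact ⟨⟨hcb, h2, by trivial, h4⟩, h1, h5⟩
    · rintro ⟨⟨a, b⟩, ⟨c, d⟩⟩ hp
      simp only [Finset.mem_coe, Finset.mem_filter, mem_T, Finset.mem_product] at hp ⊢
      obtain ⟨⟨h1, h2, h3, h4⟩, h5, h6⟩ := hp
      subst h3
      exact ⟨⟨h5, h2⟩, ⟨by trivial, h4⟩, h6⟩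
    · rintro ⟨⟨a, b⟩, ⟨c, d⟩⟩ hp
      simp only [Finset.mem_coe, Finset.mem_filter, Finset.mem_product] at hp
      obtain ⟨_, ⟨h3, _⟩, _⟩ := hp
      rw [h3]
    · rintro ⟨⟨a, b⟩, ⟨c, d⟩⟩ hp
      simp only [Finset.mem_coe, Finset.mem_filter, mem_T] at hp
      obtain ⟨⟨_, _, h3, _⟩, _⟩ := hp
      rw [h3]

lemma des_eq (μ : YoungDiagram) (F : ℕ × ℕ → ℕ)
    (hcs : ∀ i j : ℕ, (i + 1, j) ∈ μ.cells → F (i, j) < F (i + 1, j)) :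
    Des μ F = μ.cells.filter (fun c => 1 ≤ c.1) := by
  apply Finset.filter_congr
  rintro ⟨a, b⟩ hc
  simp only [and_iff_left_iff_imp]
  intro ha
  have := hcs (a - 1) b (by rwa [show a - 1 + 1 = a by omega])
  rwa [show a - 1 + 1 = a by omega] at this

lemma arm_sum (μ : YoungDiagram) (F : ℕ × ℕ → ℕ)
    (hcs : ∀ i j : ℕ, (i + 1, j) ∈ μ.cells → F (i, j) < F (i + 1, j)) :
    ∑ u ∈ Des μ F, (arm μ u : ℤ) =
      (((T μ).filter (fun p => (p.1.1 + 1, p.1.2) ∈ μ.cells)).card : ℤ) := by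
  rw [des_eq μ F hcs]
  have key : ∑ u ∈ μ.cells.filter (fun c => 1 ≤ c.1), arm μ u =
      ((T μ).filter (fun p => (p.1.1 + 1, p.1.2) ∈ μ.cells)).card := by
    set S : Finset ((ℕ × ℕ) × (ℕ × ℕ)) :=
      (μ.cells ×ˢ μ.cells).filter
        (fun q => q.1.1 = q.2.1 ∧ q.1.2 < q.2.2 ∧ 1 ≤ q.1.1) with hS
    have hfib : S.card = ∑ u ∈ μ.cells.filter (fun c => 1 ≤ c.1),
        (S.filter (fun q => q.1 = u)).card := by
      apply Finset.card_eq_sum_card_fiberwise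
      rintro ⟨⟨a, b⟩, ⟨c, d⟩⟩ hq
      simp only [Finset.mem_coe, hS, Finset.mem_filter, Finset.mem_product] at hq ⊢
      exact ⟨hq.1.1, by omega⟩
    have harm : ∀ u ∈ μ.cells.filter (fun c => 1 ≤ c.1),
        (S.filter (fun q => q.1 = u)).card = arm μ u := by
      rintro ⟨a, b⟩ hu
      simp only [Finset.mem_filter] at hu
      have : (S.filter (fun q => q.1 = (a, b))).card =
          (Finset.Ioo b (μ.rowLen a)).card := by
        apply Finset.card_nbij' (fun q => q.2.2) (fun c => ((a, b), (a, c)))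
        · rintro ⟨⟨a', b'⟩, ⟨c, d⟩⟩ hq
          simp only [Finset.mem_coe, hS, Finset.mem_filter, Finset.mem_product, Prod.mk.injEq] at hq
          obtain ⟨⟨⟨_, h2⟩, h3, h4, _⟩, h6, h7⟩ := hq
          simp only [Finset.mem_coe, Finset.mem_Ioo]
          subst h6; subst h7
          rw [YoungDiagram.mem_cells, YoungDiagram.mem_iff_lt_rowLen] at h2
          subst h3
          exact ⟨h4, h2⟩
        · intro c hc
          simp only [Finset.mem_coe, Finset.mem_Ioo] at hc
          simp only [Finset.mem_coe, hS, Finset.mem_filter, Finset.mem_product]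
          refine ⟨⟨⟨hu.1, ?_⟩, by trivial, hc.1, hu.2⟩, by trivial⟩
          rw [YoungDiagram.mem_cells, YoungDiagram.mem_iff_lt_rowLen]
          exact hc.2
        · rintro ⟨⟨a', b'⟩, ⟨c, d⟩⟩ hq
          simp only [Finset.mem_coe, hS, Finset.mem_filter, Finset.mem_product, Prod.mk.injEq] at hq
          obtain ⟨⟨_, h3, _, _⟩, h6, h7⟩ := hq
          subst h6; subst h7
          simp [h3]
        · intro c _; trivial
      rw [this, Nat.card_Ioo, arm]
    have hsum : ∑ u ∈ μ.cells.filter (fun c => 1 ≤ c.1), arm μ u = S.card := by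
      rw [hfib]; exact (Finset.sum_congr rfl harm).symm
    rw [hsum]
    apply Finset.card_nbij' (fun q => ((q.1.1 - 1, q.2.2), (q.1.1 - 1, q.1.2)))
      (fun p => ((p.1.1 + 1, p.2.2), (p.1.1 + 1, p.1.2)))
    · rintro ⟨⟨a, b⟩, ⟨c, d⟩⟩ hq
      simp only [Finset.mem_coe, hS, Finset.mem_filter, Finset.mem_product] at hq
      obtain ⟨⟨h1, h2⟩, h3, h4, h5⟩ := hq
      subst h3
      simp only [Finset.mem_coe, Finset.mem_filter, mem_T]
      refine ⟨⟨cells_up h2 (by omega), cells_up h1 (by omega), by trivial, h4⟩, ?_⟩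
      rw [show a - 1 + 1 = a by omega]
      exact h2
    · rintro ⟨⟨a, b⟩, ⟨c, d⟩⟩ hp
      simp only [Finset.mem_coe, Finset.mem_filter, mem_T] at hp
      obtain ⟨⟨h1, h2, h3, h4⟩, h5⟩ := hp
      simp only at h3 h4 h5 ⊢
      subst h3
      simp only [Finset.mem_coe, hS, Finset.mem_filter, Finset.mem_product]
      exact ⟨⟨cells_left h5 h4.le, h5⟩, by trivial, h4, by omega⟩
    · rintro ⟨⟨a, b⟩, ⟨c, d⟩⟩ hq
      simp only [Finset.mem_coe, hS, Finset.mem_filter, Finset.mem_product] at hq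
      obtain ⟨_, h3, _, h5⟩ := hq
      simp only [Prod.mk.injEq]
      exact ⟨⟨by omega, trivial⟩, by omega, trivial⟩
    · rintro ⟨⟨a, b⟩, ⟨c, d⟩⟩ hp
      simp only [Finset.mem_coe, Finset.mem_filter, mem_T] at hp
      obtain ⟨⟨_, _, h3, _⟩, _⟩ := hp
      simp [h3]
  rw [← key]
  push_cast
  rfl

lemma refinv_eq (μ : YoungDiagram) (F : ℕ × ℕ → ℕ) :
    RefinvSet μ F = (T μ).filter (fun p => F p.1 < F p.2 ∧
      ((p.1.1 + 1, p.1.2) ∈ μ.cells → F p.2 < F (p.1.1 + 1, p.1.2))) := by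
  rw [T, Finset.filter_filter, RefinvSet]
  exact Finset.filter_congr (fun p _ => by tauto)

/-- For a column-strict filling `F` of partition shape,
`inv(F) = |Inv(F)| − Σ_{u ∈ Des(F)} arm(u)` equals `refinv(F)`, the number of
refinv-triples of `F`. -/
theorem stmt11 (n : ℕ) (μ : YoungDiagram) (F : ℕ × ℕ → ℕ)
    (hn : ∀ c ∈ μ.cells, 1 ≤ F c ∧ F c ≤ n)
    (hcs : ∀ i j : ℕ, (i + 1, j) ∈ μ.cells → F (i, j) < F (i + 1, j)) :
    ((InvSet μ F).card : ℤ) - ∑ u ∈ Des μ F, (arm μ u : ℤ) =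
      ((RefinvSet μ F).card : ℤ) := by
  rw [inv_card μ F, arm_sum μ F hcs, refinv_eq μ F]
  push_cast
  rw [Finset.card_filter, Finset.card_filter, Finset.card_filter, Finset.card_filter]
  push_cast
  rw [← Finset.sum_add_distrib, ← Finset.sum_sub_distrib]
  apply Finset.sum_congr rfl
  intro p hp
  have hx : p.1 ∈ μ.cells := (mem_T.mp hp).1
  by_cases hB : (p.1.1 + 1, p.1.2) ∈ μ.cells
  · have hxy : F p.1 < F (p.1.1 + 1, p.1.2) := by
      have := hcs p.1.1 p.1.2 hB
      rwa [Prod.mk.eta] at this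
    by_cases hA : F p.1 < F p.2 <;> by_cases hC : F p.2 < F (p.1.1 + 1, p.1.2) <;>
      simp [hA, hB, hC] <;> omega
  · simp [hB]

end Stmt11
end

section
/- For a column-strict filling F of partition shape λ, refinv(F) = |Inv(F)| − Σ_{u∈Des(F)} coarm(u↑), where coarm denotes the number of cells strictly to the left in the same row and u↑ is the cell above u. -/
namespace Stmt12

/-- The descent set of a filling `F` of `μ`. -/
def Des (μ : YoungDiagram) (F : ℕ × ℕ → ℕ) : Finset (ℕ × ℕ) :=
  μ.cells.filter (fun c => 1 ≤ c.1 ∧ F (c.1 - 1, c.2) < F c)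

/-- `coarm(c)` = number of cells strictly to the left of `c` in its row. -/
def coarm (c : ℕ × ℕ) : ℕ := c.2

/-- Inversions of `F` over the Inv-attack relation. -/
def InvSet (μ : YoungDiagram) (F : ℕ × ℕ → ℕ) : Finset ((ℕ × ℕ) × (ℕ × ℕ)) :=
  (μ.cells ×ˢ μ.cells).filter (fun p =>
    ((p.1.1 = p.2.1 ∧ p.1.2 < p.2.2) ∨ (p.1.1 = p.2.1 + 1 ∧ p.2.2 < p.1.2)) ∧
    F p.2 < F p.1)

/-- Refinv-triples of `F`, recorded as the pair `(x, z)`. -/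
def RefinvSet (μ : YoungDiagram) (F : ℕ × ℕ → ℕ) : Finset ((ℕ × ℕ) × (ℕ × ℕ)) :=
  (μ.cells ×ˢ μ.cells).filter (fun p =>
    p.1.1 = p.2.1 ∧ p.2.2 < p.1.2 ∧ F p.1 < F p.2 ∧
    ((p.1.1 + 1, p.1.2) ∈ μ.cells → F p.2 < F (p.1.1 + 1, p.1.2)))

/-- For a column-strict filling `F` of partition shape,
`refinv(F) = |Inv(F)| − Σ_{u ∈ Des(F)} coarm(u↑)`, where `u↑` is the cell
directly above `u`. -/
theorem stmt12 (n : ℕ) (μ : YoungDiagram) (F : ℕ × ℕ → ℕ)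
    (hn : ∀ c ∈ μ.cells, 1 ≤ F c ∧ F c ≤ n)
    (hcs : ∀ i j : ℕ, (i + 1, j) ∈ μ.cells → F (i, j) < F (i + 1, j)) :
    ((RefinvSet μ F).card : ℤ) =
      ((InvSet μ F).card : ℤ) - ∑ u ∈ Des μ F, (coarm (u.1 - 1, u.2) : ℤ) := by
  classical
  set S : Finset ((ℕ × ℕ) × (ℕ × ℕ)) := (μ.cells ×ˢ μ.cells).filter
    (fun p => p.1.1 = p.2.1 ∧ p.2.2 < p.1.2) with hSdef
  -- Step A: refinv + #{pairs whose x has a cell below} = #{F x < F z} + #{below ∧ F z < F y}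
  have hA : (RefinvSet μ F).card
      + (S.filter (fun p => (p.1.1 + 1, p.1.2) ∈ μ.cells)).card
      = (S.filter (fun p => F p.1 < F p.2)).card
      + (S.filter (fun p => (p.1.1 + 1, p.1.2) ∈ μ.cells ∧ F p.2 < F (p.1.1 + 1, p.1.2))).card := by
    have hR : RefinvSet μ F = S.filter
        (fun p => F p.1 < F p.2 ∧ ((p.1.1 + 1, p.1.2) ∈ μ.cells → F p.2 < F (p.1.1 + 1, p.1.2))) := by
      rw [hSdef, Finset.filter_filter, RefinvSet]
      congr 1
      ext p
      tauto
    rw [hR, Finset.card_filter, Finset.card_filter, Finset.card_filter, Finset.card_filter,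
      ← Finset.sum_add_distrib, ← Finset.sum_add_distrib]
    refine Finset.sum_congr rfl ?_
    rintro ⟨⟨a, b⟩, ⟨c, d⟩⟩ hp
    simp only [hSdef, Finset.mem_filter, Finset.mem_product] at hp
    by_cases h3 : ((a + 1 : ℕ), b) ∈ μ.cells
    · have hx : F (a, b) < F (a + 1, b) := hcs a b h3
      by_cases hq : F (c, d) < F (a + 1, b)
      · simp [h3, hq]
      · have h1 : F (a, b) < F (c, d) := lt_of_lt_of_le hx (le_of_not_gt hq)
        simp [h3, hq, h1]
    · simp [h3]
  -- Step B: decompose InvSet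
  have hB : (InvSet μ F).card
      = (S.filter (fun p => F p.1 < F p.2)).card
      + (S.filter (fun p => (p.1.1 + 1, p.1.2) ∈ μ.cells ∧ F p.2 < F (p.1.1 + 1, p.1.2))).card := by
    have hsplit : InvSet μ F =
        ((μ.cells ×ˢ μ.cells).filter (fun p => (p.1.1 = p.2.1 ∧ p.1.2 < p.2.2) ∧ F p.2 < F p.1))
        ∪ ((μ.cells ×ˢ μ.cells).filter
            (fun p => (p.1.1 = p.2.1 + 1 ∧ p.2.2 < p.1.2) ∧ F p.2 < F p.1)) := by
      rw [InvSet, ← Finset.filter_or]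
      congr 1
      ext p
      tauto
    have hdisj : Disjoint
        ((μ.cells ×ˢ μ.cells).filter (fun p => (p.1.1 = p.2.1 ∧ p.1.2 < p.2.2) ∧ F p.2 < F p.1))
        ((μ.cells ×ˢ μ.cells).filter
          (fun p => (p.1.1 = p.2.1 + 1 ∧ p.2.2 < p.1.2) ∧ F p.2 < F p.1)) := by
      rw [Finset.disjoint_left]
      rintro ⟨⟨a, b⟩, ⟨c, d⟩⟩ h1 h2
      simp only [Finset.mem_filter, Finset.mem_product] at h1 h2
      omega
    rw [hsplit, Finset.card_union_of_disjoint hdisj]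
    congr 1
    · -- same-row part, via swap
      apply Finset.card_nbij' Prod.swap Prod.swap
      · rintro ⟨⟨a, b⟩, ⟨c, d⟩⟩ hp
        simp only [hSdef, Finset.mem_coe, Finset.mem_filter, Finset.mem_product, Prod.swap] at hp ⊢
        obtain ⟨⟨m1, m2⟩, ⟨he, hl⟩, hF⟩ := hp
        exact ⟨⟨⟨m2, m1⟩, he.symm, hl⟩, hF⟩
      · rintro ⟨⟨a, b⟩, ⟨c, d⟩⟩ hp
        simp only [hSdef, Finset.mem_coe, Finset.mem_filter, Finset.mem_product, Prod.swap] at hp ⊢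
        obtain ⟨⟨⟨m1, m2⟩, he, hl⟩, hF⟩ := hp
        exact ⟨⟨m2, m1⟩, ⟨he.symm, hl⟩, hF⟩
      · intro p _; simp
      · intro p _; simp
    · -- adjacent-row part
      apply Finset.card_nbij' (fun p => ((p.1.1 - 1, p.1.2), p.2))
        (fun p => ((p.1.1 + 1, p.1.2), p.2))
      · rintro ⟨⟨a, b⟩, ⟨c, d⟩⟩ hp
        simp only [hSdef, Finset.mem_coe, Finset.mem_filter, Finset.mem_product] at hp ⊢
        obtain ⟨⟨h1, h2⟩, ⟨h3, h4⟩, h5⟩ := hp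
        have ha : a - 1 = c := by omega
        have ha1 : a - 1 + 1 = a := by omega
        refine ⟨⟨⟨?_, h2⟩, ha, h4⟩, ?_, ?_⟩
        · exact μ.up_left_mem (Nat.sub_le a 1) le_rfl h1
        · rw [ha1]; exact h1
        · rw [ha1]; exact h5
      · rintro ⟨⟨a, b⟩, ⟨c, d⟩⟩ hp
        simp only [hSdef, Finset.mem_coe, Finset.mem_filter, Finset.mem_product] at hp ⊢
        obtain ⟨⟨⟨h1, h2⟩, h3, h4⟩, h5, h6⟩ := hp
        exact ⟨⟨h5, h2⟩, ⟨by omega, h4⟩, h6⟩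
      · rintro ⟨⟨a, b⟩, ⟨c, d⟩⟩ hp
        simp only [Finset.mem_coe, Finset.mem_filter, Finset.mem_product] at hp
        have : a - 1 + 1 = a := by omega
        simp [this]
      · rintro ⟨⟨a, b⟩, ⟨c, d⟩⟩ _
        simp
  -- Step C: descent sum counts pairs with a cell below x
  have hC : ∑ u ∈ Des μ F, u.2
      = (S.filter (fun p => (p.1.1 + 1, p.1.2) ∈ μ.cells)).card := by
    rw [Finset.card_eq_sum_card_fiberwise (f := fun p => (p.1.1 + 1, p.1.2)) (t := Des μ F) ?_]
    · refine Finset.sum_congr rfl ?_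
      rintro ⟨u1, u2⟩ hu
      simp only [Des, Finset.mem_filter] at hu
      obtain ⟨hu1, hu2, _⟩ := hu
      have he : u1 - 1 + 1 = u1 := by omega
      calc ((u1, u2) : ℕ × ℕ).2 = (Finset.range u2).card := (Finset.card_range u2).symm
        _ = _ := ?_
      refine Finset.card_nbij' (fun b => ((u1 - 1, u2), (u1 - 1, b)))
        (fun p => p.2.2) ?_ ?_ ?_ ?_
      · intro b hb
        simp only [Finset.mem_coe, Finset.mem_range] at hb
        refine Finset.mem_filter.mpr ⟨Finset.mem_filter.mpr
          ⟨Finset.mem_filter.mpr ⟨Finset.mem_product.mpr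
            ⟨μ.up_left_mem (Nat.sub_le u1 1) le_rfl hu1,
             μ.up_left_mem (Nat.sub_le u1 1) (le_of_lt hb) hu1⟩, rfl, hb⟩,
          ?_⟩, ?_⟩
        · show (u1 - 1 + 1, u2) ∈ μ.cells
          rw [he]; exact hu1
        · show (u1 - 1 + 1, u2) = (u1, u2)
          rw [he]
      · rintro ⟨⟨a, b⟩, ⟨c, d⟩⟩ hp
        simp only [hSdef, Finset.mem_coe, Finset.mem_filter, Finset.mem_product, Prod.mk.injEq,
          Finset.mem_range] at hp ⊢
        omega
      · intro b hb
        simp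
      · rintro ⟨⟨a, b⟩, ⟨c, d⟩⟩ hp
        simp only [hSdef, Finset.mem_coe, Finset.mem_filter, Finset.mem_product, Prod.mk.injEq] at hp
        simp only [Prod.mk.injEq]
        refine ⟨⟨?_, ?_⟩, ?_, trivial⟩ <;> omega
    · rintro ⟨⟨a, b⟩, ⟨c, d⟩⟩ hp
      simp only [hSdef, Finset.mem_coe, Finset.mem_filter, Finset.mem_product] at hp
      simp only [Des, Finset.mem_coe, Finset.mem_filter]
      refine ⟨hp.2, by omega, ?_⟩
      simpa using hcs a b hp.2
  simp only [coarm]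
  have hcast : ∑ u ∈ Des μ F, ((u.1 - 1, u.2).2 : ℤ) = ((∑ u ∈ Des μ F, u.2 : ℕ) : ℤ) := by
    push_cast; rfl
  rw [hcast, hC]
  omega

end Stmt12
end

section
/- For a column-strict filling F of a partition shape, the number of queue-inversion triples of F equals quinv(F) = |Quinv(F)| − Σ_{u∈Des(F)} arm(u↑). -/
namespace Stmt13

/-- The descent set of a filling `F` of `μ`. -/
def Des (μ : YoungDiagram) (F : ℕ × ℕ → ℕ) : Finset (ℕ × ℕ) :=
  μ.cells.filter (fun c => 1 ≤ c.1 ∧ F (c.1 - 1, c.2) < F c)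

/-- `arm(c)` = number of cells of `μ` strictly to the right of `c` in its row. -/
def arm (μ : YoungDiagram) (c : ℕ × ℕ) : ℕ := μ.rowLen c.1 - c.2 - 1

/-- Queue-inversions of `F`: pairs `(u, v)` with `u` Quinv-attacking `v` (`u`
strictly to the right of `v` in the same row, or `u` in the row just below `v`
in a strictly earlier column) and `F u > F v`. -/
def QuinvSet (μ : YoungDiagram) (F : ℕ × ℕ → ℕ) : Finset ((ℕ × ℕ) × (ℕ × ℕ)) :=
  (μ.cells ×ˢ μ.cells).filter (fun p =>
    ((p.1.1 = p.2.1 ∧ p.2.2 < p.1.2) ∨ (p.1.1 = p.2.1 + 1 ∧ p.1.2 < p.2.2)) ∧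
    F p.2 < F p.1)

/-- Quinv-triples of `F`, recorded as the pair `(x, z)`: `x, z` in the same row
of `μ`, `z` strictly to the right of `x`, and `F x < F z < F y` where `y` is the
cell directly below `x` in the augmented diagram (`F y = ∞` if `y ∉ μ`). -/
def QuinvTriples (μ : YoungDiagram) (F : ℕ × ℕ → ℕ) : Finset ((ℕ × ℕ) × (ℕ × ℕ)) :=
  (μ.cells ×ˢ μ.cells).filter (fun p =>
    p.1.1 = p.2.1 ∧ p.1.2 < p.2.2 ∧ F p.1 < F p.2 ∧
    ((p.1.1 + 1, p.1.2) ∈ μ.cells → F p.2 < F (p.1.1 + 1, p.1.2)))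

/-- For a column-strict filling `F` of partition shape, the number of
quinv-triples equals `quinv(F) = |Quinv(F)| − Σ_{u ∈ Des(F)} arm(u↑)`. -/
theorem stmt13 (n : ℕ) (μ : YoungDiagram) (F : ℕ × ℕ → ℕ)
    (hn : ∀ c ∈ μ.cells, 1 ≤ F c ∧ F c ≤ n)
    (hcs : ∀ i j : ℕ, (i + 1, j) ∈ μ.cells → F (i, j) < F (i + 1, j)) :
    ((QuinvTriples μ F).card : ℤ) =
      ((QuinvSet μ F).card : ℤ) - ∑ u ∈ Des μ F, (arm μ (u.1 - 1, u.2) : ℤ) := by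

  classical
  set P : Finset ((ℕ × ℕ) × (ℕ × ℕ)) :=
    (μ.cells ×ˢ μ.cells).filter (fun p => p.1.1 = p.2.1 ∧ p.1.2 < p.2.2) with hPdef
  have hT : QuinvTriples μ F
      = P.filter (fun p => F p.1 < F p.2 ∧
          ((p.1.1 + 1, p.1.2) ∈ μ.cells → F p.2 < F (p.1.1 + 1, p.1.2))) := by
    simp only [QuinvTriples, hPdef, Finset.filter_filter, and_assoc]
  have cardA : ((μ.cells ×ˢ μ.cells).filter (fun p =>
        (p.1.1 = p.2.1 ∧ p.2.2 < p.1.2) ∧ F p.2 < F p.1)).card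
      = (P.filter (fun p => F p.1 < F p.2)).card := by
    apply Finset.card_nbij' Prod.swap Prod.swap
    · intro p hp
      rw [Finset.mem_coe] at hp ⊢
      simp only [hPdef, Finset.mem_filter, Finset.mem_product, Prod.fst_swap,
        Prod.snd_swap] at hp ⊢
      exact ⟨⟨⟨hp.1.2, hp.1.1⟩, hp.2.1.1.symm, hp.2.1.2⟩, hp.2.2⟩
    · intro p hp
      rw [Finset.mem_coe] at hp ⊢
      simp only [hPdef, Finset.mem_filter, Finset.mem_product, Prod.fst_swap,
        Prod.snd_swap] at hp ⊢
      exact ⟨⟨hp.1.1.2, hp.1.1.1⟩, ⟨hp.1.2.1.symm, hp.1.2.2⟩, hp.2⟩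
    · intro p _; simp
    · intro p _; simp
  have cardB : ((μ.cells ×ˢ μ.cells).filter (fun p =>
        (p.1.1 = p.2.1 + 1 ∧ p.1.2 < p.2.2) ∧ F p.2 < F p.1)).card
      = (P.filter (fun p => (p.1.1 + 1, p.1.2) ∈ μ.cells ∧
          F p.2 < F (p.1.1 + 1, p.1.2))).card := by
    apply Finset.card_nbij' (fun p => ((p.2.1, p.1.2), p.2))
      (fun p => ((p.1.1 + 1, p.1.2), p.2))
    · intro p hp
      rw [Finset.mem_coe] at hp ⊢
      simp only [hPdef, Finset.mem_filter, Finset.mem_product] at hp ⊢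
      obtain ⟨⟨m1, m2⟩, ⟨e1, l1⟩, l2⟩ := hp
      have m1' : (p.2.1 + 1, p.1.2) ∈ μ.cells := by
        rw [← e1, Prod.mk.eta]; exact m1
      have l2' : F p.2 < F (p.2.1 + 1, p.1.2) := by
        rw [← e1, Prod.mk.eta]; exact l2
      have hx : (p.2.1, p.1.2) ∈ μ.cells :=
        μ.up_left_mem (Nat.le_succ _) (le_refl p.1.2) m1'
      refine ⟨⟨⟨hx, m2⟩, ?_, l1⟩, m1', l2'⟩
      trivial
    · intro p hp
      rw [Finset.mem_coe] at hp ⊢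
      simp only [hPdef, Finset.mem_filter, Finset.mem_product] at hp ⊢
      obtain ⟨⟨⟨m1, m2⟩, e1, l1⟩, hy, l2⟩ := hp
      exact ⟨⟨hy, m2⟩, ⟨by omega, by omega⟩, l2⟩
    · intro p hp
      rw [Finset.mem_coe] at hp
      simp only [Finset.mem_filter, Finset.mem_product] at hp
      obtain ⟨⟨m1, m2⟩, ⟨e1, l1⟩, l2⟩ := hp
      have : p.2.1 + 1 = p.1.1 := e1.symm
      simp [Prod.ext_iff, this]
    · intro p hp
      rw [Finset.mem_coe] at hp
      simp only [hPdef, Finset.mem_filter, Finset.mem_product] at hp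
      have e := hp.1.2.1
      simp [Prod.ext_iff, e]
  have hsplit : QuinvSet μ F
      = ((μ.cells ×ˢ μ.cells).filter (fun p =>
          (p.1.1 = p.2.1 ∧ p.2.2 < p.1.2) ∧ F p.2 < F p.1))
        ∪ ((μ.cells ×ˢ μ.cells).filter (fun p =>
          (p.1.1 = p.2.1 + 1 ∧ p.1.2 < p.2.2) ∧ F p.2 < F p.1)) := by
    ext p
    simp only [QuinvSet, Finset.mem_union, Finset.mem_filter]
    tauto
  have hdisj : Disjoint
      ((μ.cells ×ˢ μ.cells).filter (fun p =>
          (p.1.1 = p.2.1 ∧ p.2.2 < p.1.2) ∧ F p.2 < F p.1))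
      ((μ.cells ×ˢ μ.cells).filter (fun p =>
          (p.1.1 = p.2.1 + 1 ∧ p.1.2 < p.2.2) ∧ F p.2 < F p.1)) := by
    rw [Finset.disjoint_left]
    intro p hp1 hp2
    simp only [Finset.mem_filter] at hp1 hp2
    omega
  have hQ : (QuinvSet μ F).card
      = (P.filter (fun p => F p.1 < F p.2)).card
        + (P.filter (fun p => (p.1.1 + 1, p.1.2) ∈ μ.cells ∧
            F p.2 < F (p.1.1 + 1, p.1.2))).card := by
    rw [hsplit, Finset.card_union_of_disjoint hdisj, cardA, cardB]
  -- Des sum as a card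
  have hD : ∑ u ∈ Des μ F, arm μ (u.1 - 1, u.2)
      = (P.filter (fun p => (p.1.1 + 1, p.1.2) ∈ μ.cells)).card := by
    rw [Finset.card_eq_sum_card_fiberwise
      (f := fun p => (p.1.1 + 1, p.1.2)) (t := Des μ F) ?_]
    · apply Finset.sum_congr rfl
      intro u hu
      simp only [Des, Finset.mem_filter] at hu
      obtain ⟨huμ, hu1, _⟩ := hu
      have huw : (u.1, u.2) ∈ μ.cells := by rw [Prod.mk.eta]; exact huμ
      have hxu : (u.1 - 1, u.2) ∈ μ.cells :=
        μ.up_left_mem (Nat.sub_le u.1 1) (le_refl u.2) huw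
      have harm : arm μ (u.1 - 1, u.2)
          = (Finset.Ico (u.2 + 1) (μ.rowLen (u.1 - 1))).card := by
        rw [Nat.card_Ico, arm, Nat.sub_sub]
      rw [harm]
      apply Finset.card_nbij' (fun k => ((u.1 - 1, u.2), (u.1 - 1, k)))
        (fun p => p.2.2)
      · intro k hk
        rw [Finset.mem_coe] at hk ⊢
        simp only [Finset.mem_Ico] at hk
        simp only [Finset.mem_filter, hPdef, Finset.mem_product, Prod.ext_iff]
        have hz : ((u.1 - 1 : ℕ), k) ∈ μ.cells := YoungDiagram.mem_iff_lt_rowLen.mpr hk.2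
        have h1 : u.1 - 1 + 1 = u.1 := by omega
        refine ⟨⟨⟨⟨hxu, hz⟩, trivial, by omega⟩, ?_⟩, by omega, trivial⟩
        rw [h1]
        exact huw
      · intro p hp
        rw [Finset.mem_coe] at hp ⊢
        simp only [Finset.mem_filter, hPdef, Finset.mem_product, Finset.mem_Ico,
          Prod.ext_iff] at hp ⊢
        obtain ⟨⟨⟨⟨m1, m2⟩, s1, s2⟩, _⟩, e1, e2⟩ := hp
        have m2w : (p.2.1, p.2.2) ∈ μ.cells := by rw [Prod.mk.eta]; exact m2
        refine ⟨by omega, ?_⟩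
        have hzr : p.2.1 = u.1 - 1 := by omega
        rw [← hzr]
        exact YoungDiagram.mem_iff_lt_rowLen.mp m2w
      · intro k _; rfl
      · intro p hp
        rw [Finset.mem_coe] at hp
        simp only [Finset.mem_filter, hPdef, Finset.mem_product, Prod.ext_iff] at hp
        obtain ⟨⟨⟨_, s1, _⟩, _⟩, e1, e2⟩ := hp
        simp only [Prod.ext_iff]
        refine ⟨⟨by omega, by omega⟩, by omega, trivial⟩
    · intro p hp
      rw [Finset.mem_coe] at hp ⊢
      simp only [hPdef, Finset.mem_filter, Finset.mem_product] at hp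
      obtain ⟨⟨⟨h1, _⟩, _⟩, hy⟩ := hp
      simp only [Des, Finset.mem_filter]
      refine ⟨hy, by omega, ?_⟩
      simpa [Prod.mk.eta] using hcs p.1.1 p.1.2 hy
  -- pointwise identity and conclusion
  have key : (QuinvTriples μ F).card
        + (P.filter (fun p => (p.1.1 + 1, p.1.2) ∈ μ.cells)).card
      = (QuinvSet μ F).card := by
    rw [hQ, hT, Finset.card_filter, Finset.card_filter, Finset.card_filter,
      Finset.card_filter, ← Finset.sum_add_distrib, ← Finset.sum_add_distrib]
    apply Finset.sum_congr rfl
    intro p hp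
    by_cases hy : (p.1.1 + 1, p.1.2) ∈ μ.cells
    · have hlt : F p.1 < F (p.1.1 + 1, p.1.2) := by
        have := hcs p.1.1 p.1.2 hy
        rwa [Prod.mk.eta] at this
      simp only [hy, forall_true_left, true_and, if_true]
      split_ifs <;> omega
    · simp [hy]
  have hcast : ∑ u ∈ Des μ F, (arm μ (u.1 - 1, u.2) : ℤ)
      = ((∑ u ∈ Des μ F, arm μ (u.1 - 1, u.2) : ℕ) : ℤ) := by push_cast; rfl
  rw [hcast, hD]
  omega


end Stmt13
end

section
/- Let F be a column-strict filling of partition shape λ with T = rsort(F), and let c be a cell in row i of F with F(c) = j+1. Then zcount(c,F), the number of quinv-triples (x,y,z) of F with z = c, satisfies zcount(c,F) ≤ SE_{ij}(T) = T^j_i − T^{j+1}_{i+1}. -/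
namespace Stmt14

/-- `T^j_i`: the number of entries `≤ j` in (0-indexed) row `i` of `F`; this is
the Gelfand–Tsetlin entry of the pattern associated to `rsort(F)`, since sorting
a row does not change its multiset of entries. -/
def Tval (μ : YoungDiagram) (F : ℕ × ℕ → ℕ) (i j : ℕ) : ℕ :=
  (μ.cells.filter (fun c => c.1 = i ∧ F c ≤ j)).card

/-- `zcount(c, F)`: the number of quinv-triples `(x, y, z)` of `F` with `z = c`;
here `x` lies in the same row as `c` strictly to its left, `y` is the cell
directly below `x` in the augmented diagram, and `F x < F c < F y`
(`F y = ∞` if `y ∉ μ`). -/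
def zcount (μ : YoungDiagram) (F : ℕ × ℕ → ℕ) (c : ℕ × ℕ) : ℕ :=
  (μ.cells.filter (fun x => x.1 = c.1 ∧ x.2 < c.2 ∧ F x < F c ∧
    ((x.1 + 1, x.2) ∈ μ.cells → F c < F (x.1 + 1, x.2)))).card

/-- For a column-strict filling `F` of partition shape with `T = rsort(F)` and a
cell `c` in row `i` with `F c = j + 1`, one has
`zcount(c, F) ≤ SE_{ij}(T) = T^j_i − T^{j+1}_{i+1}`. -/
theorem stmt14 (n : ℕ) (μ : YoungDiagram) (F : ℕ × ℕ → ℕ)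
    (hn : ∀ c ∈ μ.cells, 1 ≤ F c ∧ F c ≤ n)
    (hcs : ∀ i j : ℕ, (i + 1, j) ∈ μ.cells → F (i, j) < F (i + 1, j))
    (c : ℕ × ℕ) (hc : c ∈ μ.cells) (j : ℕ) (hFc : F c = j + 1) :
    (zcount μ F c : ℤ) ≤ (Tval μ F c.1 j : ℤ) - (Tval μ F (c.1 + 1) (j + 1) : ℤ) := by
  classical
  set A := μ.cells.filter (fun x => x.1 = c.1 ∧ x.2 < c.2 ∧ F x < F c ∧
    ((x.1 + 1, x.2) ∈ μ.cells → F c < F (x.1 + 1, x.2))) with hA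
  set B := μ.cells.filter (fun x => x.1 = c.1 ∧ F x ≤ j) with hB
  set C := μ.cells.filter (fun x => x.1 = c.1 + 1 ∧ F x ≤ j + 1) with hC
  set D := C.image (fun y : ℕ × ℕ => (c.1, y.2)) with hD
  have hCmem : ∀ y ∈ C, y ∈ μ.cells ∧ y.1 = c.1 + 1 ∧ F y ≤ j + 1 := by
    intro y hy
    simpa using Finset.mem_filter.mp hy
  have hup : ∀ y ∈ C, (c.1, y.2) ∈ μ.cells ∧ F (c.1, y.2) ≤ j := by
    intro y hy
    obtain ⟨hyμ, hy1, hyF⟩ := hCmem y hy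
    have hyμ' : (c.1 + 1, y.2) ∈ μ := by rwa [← hy1, Prod.mk.eta]
    have hmem : (c.1, y.2) ∈ μ := μ.up_left_mem (by omega) le_rfl hyμ'
    have hlt : F (c.1, y.2) < F (c.1 + 1, y.2) := hcs c.1 y.2 hyμ'
    have : F (c.1 + 1, y.2) ≤ j + 1 := by rwa [← hy1, Prod.mk.eta]
    exact ⟨hmem, by omega⟩
  have hDsub : D ⊆ B := by
    intro z hz
    obtain ⟨y, hy, rfl⟩ := Finset.mem_image.mp hz
    obtain ⟨hmem, hle⟩ := hup y hy
    exact Finset.mem_filter.mpr ⟨hmem, rfl, hle⟩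
  have hAsub : A ⊆ B := by
    intro x hx
    obtain ⟨hxμ, hx1, _, hxF, _⟩ := by simpa using Finset.mem_filter.mp hx
    exact Finset.mem_filter.mpr ⟨hxμ, hx1, by omega⟩
  have hdisj : Disjoint A D := by
    rw [Finset.disjoint_left]
    intro x hx hxD
    obtain ⟨hxμ, hx1, _, hxF, himp⟩ := by simpa using Finset.mem_filter.mp hx
    obtain ⟨y, hy, hxy⟩ := Finset.mem_image.mp hxD
    obtain ⟨hyμ, hy1, hyF⟩ := hCmem y hy
    have hx2 : x.2 = y.2 := by rw [← hxy]
    have hyμ' : (x.1 + 1, x.2) ∈ μ.cells := by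
      rw [hx1, hx2, ← hy1, Prod.mk.eta]; exact hyμ
    have := himp hyμ'
    have : F (x.1 + 1, x.2) ≤ j + 1 := by
      rw [hx1, hx2, ← hy1, Prod.mk.eta]; exact hyF
    omega
  have hDcard : D.card = C.card := by
    apply Finset.card_image_of_injOn
    intro a ha b hb h
    obtain ⟨_, ha1, _⟩ := hCmem a ha
    obtain ⟨_, hb1, _⟩ := hCmem b hb
    have h2 : a.2 = b.2 := by simpa using congrArg Prod.snd h
    exact Prod.ext (by omega) h2
  have key : A.card + C.card ≤ B.card := by
    rw [← hDcard, ← Finset.card_union_of_disjoint hdisj]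
    exact Finset.card_le_card (Finset.union_subset hAsub hDsub)
  have hz : zcount μ F c = A.card := rfl
  have hT1 : Tval μ F c.1 j = B.card := rfl
  have hT2 : Tval μ F (c.1 + 1) (j + 1) = C.card := rfl
  rw [hz, hT1, hT2]
  omega

end Stmt14
end

section
/- Let F be a column-strict filling of partition shape λ and let c, d be two cells in the same row of F containing the same entry, with c to the right of d. Then zcount(c,F) ≥ zcount(d,F), where zcount(u,F) is the number of quinv-triples of F with third component u. -/
namespace Stmt15

/-- `zcount(c, F)`: the number of quinv-triples `(x, y, z)` of `F` with `z = c`. -/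
def zcount (μ : YoungDiagram) (F : ℕ × ℕ → ℕ) (c : ℕ × ℕ) : ℕ :=
  (μ.cells.filter (fun x => x.1 = c.1 ∧ x.2 < c.2 ∧ F x < F c ∧
    ((x.1 + 1, x.2) ∈ μ.cells → F c < F (x.1 + 1, x.2)))).card

/-- For a column-strict filling `F` of partition shape and cells `c, d` in the
same row containing the same entry with `c` to the right of `d`,
`zcount(c, F) ≥ zcount(d, F)`. -/
theorem stmt15 (n : ℕ) (μ : YoungDiagram) (F : ℕ × ℕ → ℕ)
    (hn : ∀ c ∈ μ.cells, 1 ≤ F c ∧ F c ≤ n)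
    (hcs : ∀ i j : ℕ, (i + 1, j) ∈ μ.cells → F (i, j) < F (i + 1, j))
    (c d : ℕ × ℕ) (hc : c ∈ μ.cells) (hd : d ∈ μ.cells)
    (hrow : c.1 = d.1) (hval : F c = F d) (hlr : d.2 < c.2) :
    zcount μ F d ≤ zcount μ F c := by
  apply Finset.card_le_card
  intro x hx
  simp only [Finset.mem_filter] at hx ⊢
  obtain ⟨hm, h1, h2, h3, h4⟩ := hx
  exact ⟨hm, hrow ▸ h1, h2.trans hlr, hval ▸ h3, fun h => hval ▸ h4 h⟩

end Stmt15
end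

section
/- Let F be a column-strict filling of partition shape λ with T = rsort(F). Then zcount(c,F) = SE_{ij}(T) for all i, j and all cells c in row i with F(c) = j+1 if and only if F = T (i.e., F is already a semistandard Young tableau). -/
namespace Stmt16

/-- `T^j_i`: the number of entries `≤ j` in (0-indexed) row `i` of `F`, i.e. the
Gelfand–Tsetlin entry of the pattern associated to `rsort(F)`. -/
def Tval (μ : YoungDiagram) (F : ℕ × ℕ → ℕ) (i j : ℕ) : ℕ :=
  (μ.cells.filter (fun c => c.1 = i ∧ F c ≤ j)).card

/-- `zcount(c, F)`: the number of quinv-triples `(x, y, z)` of `F` with `z = c`. -/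
def zcount (μ : YoungDiagram) (F : ℕ × ℕ → ℕ) (c : ℕ × ℕ) : ℕ :=
  (μ.cells.filter (fun x => x.1 = c.1 ∧ x.2 < c.2 ∧ F x < F c ∧
    ((x.1 + 1, x.2) ∈ μ.cells → F c < F (x.1 + 1, x.2)))).card

/-- Cells in row `i` with value `≤ j` whose below-cell (if in `μ`) has value `> j+1`. -/
private def Bset (μ : YoungDiagram) (F : ℕ × ℕ → ℕ) (i j : ℕ) : Finset (ℕ × ℕ) :=
  μ.cells.filter (fun x => (x.1 = i ∧ F x ≤ j) ∧
    ¬((x.1 + 1, x.2) ∈ μ.cells ∧ F (x.1 + 1, x.2) ≤ j + 1))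

private lemma SE_eq (μ : YoungDiagram) (F : ℕ × ℕ → ℕ)
    (hcs : ∀ i j : ℕ, (i + 1, j) ∈ μ.cells → F (i, j) < F (i + 1, j)) (i j : ℕ) :
    (Tval μ F i j : ℤ) - (Tval μ F (i + 1) (j + 1) : ℤ) = ((Bset μ F i j).card : ℤ) := by
  classical
  have hC : Tval μ F (i + 1) (j + 1)
      = (μ.cells.filter (fun x => (x.1 = i ∧ F x ≤ j) ∧
          ((x.1 + 1, x.2) ∈ μ.cells ∧ F (x.1 + 1, x.2) ≤ j + 1))).card := by
    unfold Tval
    refine Finset.card_bij' (fun y _ => ((i : ℕ), y.2)) (fun x _ => (x.1 + 1, x.2))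
      ?_ ?_ ?_ ?_
    · intro y hy
      rw [Finset.mem_filter] at hy
      obtain ⟨hyμ, hrow, hle⟩ := hy
      have hyeq : y = ((i + 1 : ℕ), y.2) := by rw [← hrow]
      have hy' : ((i + 1 : ℕ), y.2) ∈ μ.cells := hyeq ▸ hyμ
      have hlt : F (i, y.2) < F (i + 1, y.2) := hcs i y.2 hy'
      have hval : F ((i + 1 : ℕ), y.2) ≤ j + 1 := hyeq ▸ hle
      show ((i : ℕ), y.2) ∈ μ.cells.filter (fun x => (x.1 = i ∧ F x ≤ j) ∧
          ((x.1 + 1, x.2) ∈ μ.cells ∧ F (x.1 + 1, x.2) ≤ j + 1))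
      rw [Finset.mem_filter]
      exact ⟨μ.up_left_mem (Nat.le_succ i) le_rfl hy', ⟨rfl, by omega⟩, hy', hval⟩
    · intro x hx
      rw [Finset.mem_filter] at hx
      obtain ⟨hxμ, ⟨hrow, _⟩, hbμ, hble⟩ := hx
      show ((x.1 + 1 : ℕ), x.2) ∈ μ.cells.filter (fun c => c.1 = i + 1 ∧ F c ≤ j + 1)
      rw [Finset.mem_filter]
      exact ⟨hbμ, by simp [hrow], hble⟩
    · intro y hy
      rw [Finset.mem_filter] at hy
      obtain ⟨-, hrow, -⟩ := hy
      show ((i + 1 : ℕ), y.2) = y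
      rw [← hrow]
    · intro x hx
      rw [Finset.mem_filter] at hx
      obtain ⟨-, ⟨hrow, -⟩, -, -⟩ := hx
      show ((i : ℕ), x.2) = x
      rw [← hrow]
  have hsplit := Finset.card_filter_add_card_filter_not
    (s := μ.cells.filter (fun x => x.1 = i ∧ F x ≤ j))
    (p := fun x => ((x.1 + 1, x.2) ∈ μ.cells ∧ F (x.1 + 1, x.2) ≤ j + 1))
  rw [Finset.filter_filter, Finset.filter_filter] at hsplit
  have hT : Tval μ F i j = (μ.cells.filter (fun x => x.1 = i ∧ F x ≤ j)).card := rfl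
  have hB : (Bset μ F i j).card
      = (μ.cells.filter (fun x => (x.1 = i ∧ F x ≤ j) ∧
          ¬((x.1 + 1, x.2) ∈ μ.cells ∧ F (x.1 + 1, x.2) ≤ j + 1))).card := rfl
  rw [hC, hT, hB]
  omega

private lemma zcount_eq (μ : YoungDiagram) (F : ℕ × ℕ → ℕ) {c : ℕ × ℕ} {j : ℕ}
    (hFc : F c = j + 1) :
    zcount μ F c = ((Bset μ F c.1 j).filter (fun x => x.2 < c.2)).card := by
  classical
  unfold zcount Bset
  rw [Finset.filter_filter]
  apply congrArg Finset.card
  apply Finset.filter_congr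
  intro x _
  constructor
  · rintro ⟨h1, h2, h3, h4⟩
    refine ⟨⟨⟨h1, by omega⟩, ?_⟩, h2⟩
    rintro ⟨hb, hble⟩
    have := h4 hb
    omega
  · rintro ⟨⟨⟨h1, h2⟩, h3⟩, h4⟩
    refine ⟨h1, h4, by omega, ?_⟩
    intro hb
    by_contra hle
    exact h3 ⟨hb, by omega⟩

private lemma row_mono (μ : YoungDiagram) (F : ℕ × ℕ → ℕ)
    (hrow : ∀ c ∈ μ.cells, (c.1, c.2 + 1) ∈ μ.cells → F c ≤ F (c.1, c.2 + 1))
    (i a : ℕ) : ∀ b : ℕ, a ≤ b → ((i, b) ∈ μ.cells) → F (i, a) ≤ F (i, b) := by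
  intro b
  induction b with
  | zero =>
    intro hab _
    have : a = 0 := by omega
    rw [this]
  | succ b ih =>
    intro hab hmem
    rcases Nat.eq_or_lt_of_le hab with h | h
    · rw [h]
    · have hb : ((i : ℕ), b) ∈ μ.cells := μ.up_left_mem le_rfl (Nat.le_succ b) hmem
      have h1 := ih (by omega) hb
      have h2 := hrow (i, b) hb (by simpa using hmem)
      exact h1.trans h2

/-- For a column-strict filling `F` of partition shape with `T = rsort(F)`:
`zcount(c, F) = SE_{ij}(T)` for all `i, j` and all cells `c` in row `i` with
`F c = j + 1`, if and only if `F = T`, i.e. the rows of `F` are already weakly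
increasing (so that `F` is a semistandard Young tableau). -/
theorem stmt16 (n : ℕ) (μ : YoungDiagram) (F : ℕ × ℕ → ℕ)
    (hn : ∀ c ∈ μ.cells, 1 ≤ F c ∧ F c ≤ n)
    (hcs : ∀ i j : ℕ, (i + 1, j) ∈ μ.cells → F (i, j) < F (i + 1, j)) :
    (∀ j : ℕ, ∀ c ∈ μ.cells, F c = j + 1 →
        (zcount μ F c : ℤ) = (Tval μ F c.1 j : ℤ) - (Tval μ F (c.1 + 1) (j + 1) : ℤ)) ↔
      (∀ c ∈ μ.cells, (c.1, c.2 + 1) ∈ μ.cells → F c ≤ F (c.1, c.2 + 1)) := by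
  classical
  constructor
  · intro H
    by_contra hbad
    push_neg at hbad
    obtain ⟨c0, hc0, hn0, hlt0⟩ := hbad
    set S := (μ.cells ×ˢ μ.cells).filter
      (fun p => p.1.1 = p.2.1 ∧ p.1.2 < p.2.2 ∧ F p.2 < F p.1) with hSdef
    have hS : (c0, ((c0.1 : ℕ), c0.2 + 1)) ∈ S := by
      rw [hSdef, Finset.mem_filter, Finset.mem_product]
      exact ⟨⟨hc0, hn0⟩, rfl, Nat.lt_succ_self _, hlt0⟩
    obtain ⟨p, hp, hmax⟩ := Finset.exists_max_image S (fun p => F p.1) ⟨_, hS⟩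
    rw [hSdef, Finset.mem_filter, Finset.mem_product] at hp
    obtain ⟨⟨hcμ, hxμ⟩, hprow, hcol, hval⟩ := hp
    set c := p.1 with hc
    set x := p.2 with hx
    have h1 : 1 ≤ F c := (hn c hcμ).1
    have hj : F c = (F c - 1) + 1 := by omega
    have hE := H (F c - 1) c hcμ hj
    rw [SE_eq μ F hcs, zcount_eq μ F hj] at hE
    have hcard : ((Bset μ F c.1 (F c - 1)).filter (fun y => y.2 < c.2)).card
        = (Bset μ F c.1 (F c - 1)).card := by exact_mod_cast hE
    have hall : ∀ y ∈ Bset μ F c.1 (F c - 1), y.2 < c.2 := by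
      intro y hy
      have heq : (Bset μ F c.1 (F c - 1)).filter (fun y => y.2 < c.2)
          = Bset μ F c.1 (F c - 1) :=
        Finset.eq_of_subset_of_card_le (Finset.filter_subset _ _) (le_of_eq hcard.symm)
      rw [← heq] at hy
      exact (Finset.mem_filter.mp hy).2
    by_cases hb : ((x.1 + 1 : ℕ), x.2) ∈ μ.cells ∧ F (x.1 + 1, x.2) ≤ F c
    · obtain ⟨hbμ, hble⟩ := hb
      have hbc : ((c.1 + 1 : ℕ), c.2) ∈ μ.cells :=
        μ.up_left_mem (by omega) (by omega) hbμ
      have hlt : F (c.1, c.2) < F (c.1 + 1, c.2) := hcs c.1 c.2 hbc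
      have hceq : F (c.1, c.2) = F c := by rw [Prod.mk.eta]
      have hpair : (((c.1 + 1 : ℕ), c.2), ((x.1 + 1 : ℕ), x.2)) ∈ S := by
        rw [hSdef, Finset.mem_filter, Finset.mem_product]
        refine ⟨⟨hbc, hbμ⟩, ?_, ?_, ?_⟩
        · show (c.1 + 1 : ℕ) = x.1 + 1
          omega
        · show (c.2 : ℕ) < x.2
          exact hcol
        · show F ((x.1 + 1 : ℕ), x.2) < F ((c.1 + 1 : ℕ), c.2)
          omega
      have hle : F ((c.1 + 1 : ℕ), c.2) ≤ F c := hmax _ hpair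
      omega
    · have hxB : x ∈ Bset μ F c.1 (F c - 1) := by
        unfold Bset
        rw [Finset.mem_filter]
        refine ⟨hxμ, ⟨hprow.symm, by omega⟩, ?_⟩
        intro h
        exact hb ⟨h.1, by omega⟩
      have := hall x hxB
      omega
  · intro hrow j c hc hFc
    rw [zcount_eq μ F hFc, SE_eq μ F hcs]
    have heq : (Bset μ F c.1 j).filter (fun x => x.2 < c.2) = Bset μ F c.1 j := by
      apply Finset.filter_true_of_mem
      intro y hy
      unfold Bset at hy
      rw [Finset.mem_filter] at hy
      obtain ⟨hyμ, ⟨hyrow, hyle⟩, -⟩ := hy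
      by_contra hge
      push_neg at hge
      have hcy : ((c.1 : ℕ), y.2) ∈ μ.cells := by
        have : y = ((c.1 : ℕ), y.2) := by rw [← hyrow]
        rwa [this] at hyμ
      have hmono := row_mono μ F hrow c.1 c.2 y.2 hge hcy
      have h1 : F (c.1, c.2) = F c := by rw [Prod.mk.eta]
      have h2 : F ((c.1 : ℕ), y.2) = F y := by
        have : y = ((c.1 : ℕ), y.2) := by rw [← hyrow]
        rw [← this]
      omega
    rw [heq]

end Stmt16
end

section
/- Let F be a column-strict filling of partition shape λ, T = rsort(F), and c a cell in row i with F(c) = j+1. Then zcount(c,F) + z̄count(c,F) = SE_{ij}(T), where zcount(c,F) counts quinv-triples with third component c and z̄count(c,F) counts refinv-triples with third component c. -/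
namespace Stmt17

/-- `T^j_i`: the number of entries `≤ j` in (0-indexed) row `i` of `F`, i.e. the
Gelfand–Tsetlin entry of the pattern associated to `rsort(F)`. -/
def Tval (μ : YoungDiagram) (F : ℕ × ℕ → ℕ) (i j : ℕ) : ℕ :=
  (μ.cells.filter (fun c => c.1 = i ∧ F c ≤ j)).card

/-- `zcount(c, F)`: the number of quinv-triples `(x, y, z)` of `F` with `z = c`
(`x` in the same row strictly to the left of `c`, `y` directly below `x` in the
augmented diagram, `F x < F c < F y`, `F y = ∞` outside `μ`). -/
def zcount (μ : YoungDiagram) (F : ℕ × ℕ → ℕ) (c : ℕ × ℕ) : ℕ :=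
  (μ.cells.filter (fun x => x.1 = c.1 ∧ x.2 < c.2 ∧ F x < F c ∧
    ((x.1 + 1, x.2) ∈ μ.cells → F c < F (x.1 + 1, x.2)))).card

/-- `z̄count(c, F)`: the number of refinv-triples `(x, y, z)` of `F` with `z = c`
(`x` in the same row strictly to the right of `c`). -/
def zbcount (μ : YoungDiagram) (F : ℕ × ℕ → ℕ) (c : ℕ × ℕ) : ℕ :=
  (μ.cells.filter (fun x => x.1 = c.1 ∧ c.2 < x.2 ∧ F x < F c ∧
    ((x.1 + 1, x.2) ∈ μ.cells → F c < F (x.1 + 1, x.2)))).card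

/-- For a column-strict filling `F` of partition shape, `T = rsort(F)`, and a
cell `c` in row `i` with `F c = j + 1`:
`zcount(c, F) + z̄count(c, F) = SE_{ij}(T) = T^j_i − T^{j+1}_{i+1}`. -/
theorem stmt17 (n : ℕ) (μ : YoungDiagram) (F : ℕ × ℕ → ℕ)
    (hn : ∀ c ∈ μ.cells, 1 ≤ F c ∧ F c ≤ n)
    (hcs : ∀ i j : ℕ, (i + 1, j) ∈ μ.cells → F (i, j) < F (i + 1, j))
    (c : ℕ × ℕ) (hc : c ∈ μ.cells) (j : ℕ) (hFc : F c = j + 1) :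
    (zcount μ F c : ℤ) + (zbcount μ F c : ℤ) =
      (Tval μ F c.1 j : ℤ) - (Tval μ F (c.1 + 1) (j + 1) : ℤ) := by
  classical
  set A := μ.cells.filter (fun x => x.1 = c.1 ∧ F x ≤ j) with hA
  set Cs := μ.cells.filter (fun y => y.1 = c.1 + 1 ∧ F y ≤ j + 1) with hCs
  set B := μ.cells.filter (fun x => x.1 = c.1 ∧ F x ≤ j ∧
      ((x.1 + 1, x.2) ∈ μ.cells → F c < F (x.1 + 1, x.2))) with hB
  have hTA : Tval μ F c.1 j = A.card := rfl
  have hTC : Tval μ F (c.1 + 1) (j + 1) = Cs.card := rfl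
  -- Step 1: zcount + zbcount = B.card
  have h1 : zcount μ F c + zbcount μ F c = B.card := by
    have hu : B = μ.cells.filter (fun x =>
        (x.1 = c.1 ∧ x.2 < c.2 ∧ F x < F c ∧
          ((x.1 + 1, x.2) ∈ μ.cells → F c < F (x.1 + 1, x.2))) ∨
        (x.1 = c.1 ∧ c.2 < x.2 ∧ F x < F c ∧
          ((x.1 + 1, x.2) ∈ μ.cells → F c < F (x.1 + 1, x.2)))) := by
      rw [hB]
      apply Finset.filter_congr
      intro x hx
      constructor
      · rintro ⟨h1, h2, h3⟩
        have hlt : F x < F c := by omega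
        have hne : x.2 ≠ c.2 := by
          intro h
          have : x = c := Prod.ext h1 h
          rw [this] at hlt; omega
        rcases lt_or_gt_of_ne hne with h | h
        · exact Or.inl ⟨h1, h, hlt, h3⟩
        · exact Or.inr ⟨h1, h, hlt, h3⟩
      · rintro (⟨h1, h2, h3, h4⟩ | ⟨h1, h2, h3, h4⟩) <;>
          exact ⟨h1, by omega, h4⟩
    rw [hu, Finset.filter_or, Finset.card_union_of_disjoint, zcount, zbcount]
    rw [Finset.disjoint_left]
    intro a ha hb
    simp only [Finset.mem_filter] at ha hb
    omega
  -- Step 2: (A \ B).card = Cs.card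
  have hBA : B ⊆ A := by
    intro x hx
    simp only [hA, hB, Finset.mem_filter] at hx ⊢
    exact ⟨hx.1, hx.2.1, hx.2.2.1⟩
  have h2 : (A \ B).card = Cs.card := by
    apply Finset.card_bij (fun x _ => (x.1 + 1, x.2))
    · intro x hx
      simp only [hA, hB, Finset.mem_sdiff, Finset.mem_filter, not_and] at hx
      obtain ⟨⟨hxμ, hx1, hxj⟩, hnb⟩ := hx
      have := hnb hxμ hx1 hxj
      push_neg at this
      obtain ⟨hmem, hle⟩ := this
      simp only [hCs, Finset.mem_filter]
      exact ⟨hmem, by simp [hx1], by omega⟩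
    · intro a ha b hb h
      simp only [Prod.mk.injEq] at h
      exact Prod.ext (by omega) h.2
    · rintro ⟨y1, y2⟩ hy
      simp only [hCs, Finset.mem_filter] at hy
      obtain ⟨hyμ, hy1, hyj⟩ := hy
      subst hy1
      have hxμ : (c.1, y2) ∈ μ := μ.up_left_mem (Nat.le_succ _) le_rfl ((YoungDiagram.mem_cells _).mp hyμ)
      have hcol : F (c.1, y2) < F (c.1 + 1, y2) := hcs c.1 y2 hyμ
      refine ⟨(c.1, y2), ?_, rfl⟩
      simp only [hA, hB, Finset.mem_sdiff, Finset.mem_filter]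
      refine ⟨⟨(YoungDiagram.mem_cells _).mpr hxμ, by trivial, by omega⟩, ?_⟩
      push_neg
      intro _ _ _
      exact ⟨hyμ, by omega⟩
  have h3 : (A \ B).card + B.card = A.card := Finset.card_sdiff_add_card_eq_card hBA
  rw [hTA, hTC]
  omega

end Stmt17
end

section
/- For a column-strict filling F of partition shape λ, Σ_{c ∈ dg(λ)} z̄count(c,F) = inv(F), where z̄count(c,F) is the number of refinv-triples of F whose third component is c; moreover z̄count(c,F) = 0 for all c if and only if F = rsort(F). -/
namespace Stmt18

/-- The descent set of a filling `F` of `μ`. -/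
def Des (μ : YoungDiagram) (F : ℕ × ℕ → ℕ) : Finset (ℕ × ℕ) :=
  μ.cells.filter (fun c => 1 ≤ c.1 ∧ F (c.1 - 1, c.2) < F c)

/-- `arm(c)` = number of cells of `μ` strictly to the right of `c` in its row. -/
def arm (μ : YoungDiagram) (c : ℕ × ℕ) : ℕ := μ.rowLen c.1 - c.2 - 1

/-- Inversions of `F` over the Inv-attack relation. -/
def InvSet (μ : YoungDiagram) (F : ℕ × ℕ → ℕ) : Finset ((ℕ × ℕ) × (ℕ × ℕ)) :=
  (μ.cells ×ˢ μ.cells).filter (fun p =>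
    ((p.1.1 = p.2.1 ∧ p.1.2 < p.2.2) ∨ (p.1.1 = p.2.1 + 1 ∧ p.2.2 < p.1.2)) ∧
    F p.2 < F p.1)

/-- `z̄count(c, F)`: the number of refinv-triples `(x, y, z)` of `F` with `z = c`
(`x` in the same row strictly to the right of `c`, `y` directly below `x` in the
augmented diagram, `F x < F c < F y`, with `F y = ∞` outside `μ`). -/
def zbcount (μ : YoungDiagram) (F : ℕ × ℕ → ℕ) (c : ℕ × ℕ) : ℕ :=
  (μ.cells.filter (fun x => x.1 = c.1 ∧ c.2 < x.2 ∧ F x < F c ∧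
    ((x.1 + 1, x.2) ∈ μ.cells → F c < F (x.1 + 1, x.2)))).card

/- ### auxiliary lemmas -/

lemma sum_card_filter {α β : Type*} (s : Finset α) (t : Finset β) (p : α → β → Prop)
    [∀ a b, Decidable (p a b)] :
    ∑ a ∈ s, (t.filter (p a)).card = ((s ×ˢ t).filter (fun q => p q.1 q.2)).card := by
  rw [Finset.card_filter, Finset.sum_product]
  refine Finset.sum_congr rfl fun a _ => ?_
  rw [Finset.card_filter]

lemma row_tail_card (μ : YoungDiagram) (u : ℕ × ℕ) :
    (μ.cells.filter (fun v => v.1 = u.1 ∧ u.2 < v.2)).card = μ.rowLen u.1 - u.2 - 1 := by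
  have h : μ.cells.filter (fun v => v.1 = u.1 ∧ u.2 < v.2)
      = (Finset.Ico (u.2 + 1) (μ.rowLen u.1)).image (fun k => (u.1, k)) := by
    ext ⟨a, b⟩
    simp only [Finset.mem_filter, Finset.mem_image, Finset.mem_Ico, YoungDiagram.mem_cells,
      Prod.mk.injEq]
    constructor
    · rintro ⟨hv, rfl, h2⟩
      exact ⟨b, ⟨h2, YoungDiagram.mem_iff_lt_rowLen.mp hv⟩, rfl, rfl⟩
    · rintro ⟨k, ⟨hk1, hk2⟩, rfl, rfl⟩
      exact ⟨YoungDiagram.mem_iff_lt_rowLen.mpr hk2, rfl, hk1⟩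
  rw [h, Finset.card_image_of_injective _ (fun x y h => by simpa using h), Nat.card_Ico]
  omega

/-- Under column-strictness, every cell in a row `≥ 1` is a descent. -/
lemma des_eq (μ : YoungDiagram) (F : ℕ × ℕ → ℕ)
    (hcs : ∀ i j : ℕ, (i + 1, j) ∈ μ.cells → F (i, j) < F (i + 1, j)) :
    Des μ F = μ.cells.filter (fun c => 1 ≤ c.1) := by
  apply Finset.filter_congr
  rintro ⟨i, j⟩ hc
  simp only [and_iff_left_iff_imp]
  intro hi
  have h := hcs (i - 1) j
  rw [Nat.sub_add_cancel hi] at h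
  exact h hc

/-- The ℕ-valued core identity. -/
lemma main_nat (μ : YoungDiagram) (F : ℕ × ℕ → ℕ)
    (hcs : ∀ i j : ℕ, (i + 1, j) ∈ μ.cells → F (i, j) < F (i + 1, j)) :
    (∑ c ∈ μ.cells, zbcount μ F c) + (∑ u ∈ Des μ F, arm μ u) = (InvSet μ F).card := by
  classical
  set P := μ.cells ×ˢ μ.cells with hP
  -- left sum as one card
  have h1 : ∑ c ∈ μ.cells, zbcount μ F c
      = (P.filter (fun q => q.2.1 = q.1.1 ∧ q.1.2 < q.2.2 ∧ F q.2 < F q.1 ∧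
          ((q.2.1 + 1, q.2.2) ∈ μ.cells → F q.1 < F (q.2.1 + 1, q.2.2)))).card := by
    unfold zbcount
    exact sum_card_filter μ.cells μ.cells _
  -- arm sum as one card
  have h2 : ∑ u ∈ Des μ F, arm μ u
      = (P.filter (fun q => 1 ≤ q.1.1 ∧ q.2.1 = q.1.1 ∧ q.1.2 < q.2.2)).card := by
    rw [des_eq μ F hcs, Finset.sum_filter]
    rw [← sum_card_filter μ.cells μ.cells
      (fun u v => 1 ≤ u.1 ∧ v.1 = u.1 ∧ u.2 < v.2)]
    refine Finset.sum_congr rfl fun u _ => ?_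
    by_cases h : 1 ≤ u.1
    · rw [if_pos h, show arm μ u = μ.rowLen u.1 - u.2 - 1 from rfl, ← row_tail_card]
      congr 1
      exact Finset.filter_congr (fun v _ => by
        constructor
        · rintro ⟨h1, h2⟩; exact ⟨h, h1, h2⟩
        · rintro ⟨_, h1, h2⟩; exact ⟨h1, h2⟩)
    · rw [if_neg h]
      rw [Finset.filter_false_of_mem (fun v _ => by simp [h])]
      simp
  -- shift the arm sum down a row
  have h3 : (P.filter (fun q => 1 ≤ q.1.1 ∧ q.2.1 = q.1.1 ∧ q.1.2 < q.2.2)).card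
      = (P.filter (fun q => q.2.1 = q.1.1 ∧ q.1.2 < q.2.2 ∧
          (q.2.1 + 1, q.2.2) ∈ μ.cells)).card := by
    apply Finset.card_nbij' (fun q => ((q.1.1 - 1, q.1.2), (q.2.1 - 1, q.2.2)))
      (fun q => ((q.1.1 + 1, q.1.2), (q.2.1 + 1, q.2.2)))
    · rintro ⟨⟨a, b⟩, ⟨c, d⟩⟩ (hq : _ ∈ (_ : Finset _))
      show _ ∈ (_ : Finset _)
      simp only [Finset.mem_filter, Finset.mem_product, YoungDiagram.mem_cells, hP] at hq ⊢
      obtain ⟨⟨m1, m2⟩, hr1, hr2, hlt⟩ := hq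
      refine ⟨⟨μ.up_left_mem (by omega) le_rfl m1, μ.up_left_mem (by omega) le_rfl m2⟩,
        by omega, hlt, ?_⟩
      rw [show c - 1 + 1 = c from by omega]
      exact m2
    · rintro ⟨⟨a, b⟩, ⟨c, d⟩⟩ (hq : _ ∈ (_ : Finset _))
      show _ ∈ (_ : Finset _)
      simp only [Finset.mem_filter, Finset.mem_product, YoungDiagram.mem_cells, hP] at hq ⊢
      obtain ⟨⟨m1, m2⟩, hr, hlt, hm⟩ := hq
      exact ⟨⟨μ.up_left_mem (by omega) (by omega) hm, hm⟩, by omega, by omega, hlt⟩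
    · rintro ⟨⟨a, b⟩, ⟨c, d⟩⟩ (hq : _ ∈ (_ : Finset _))
      simp only [Finset.mem_filter, Finset.mem_product, hP] at hq
      obtain ⟨_, hr1, hr2, hlt⟩ := hq
      simp only [Prod.mk.injEq, and_true, true_and]
      omega
    · rintro ⟨⟨a, b⟩, ⟨c, d⟩⟩ _
      simp
  -- split InvSet into the same-row part and the adjacent-row part
  have h4 : (InvSet μ F).card
      = (P.filter (fun q => (q.1.1 = q.2.1 ∧ q.1.2 < q.2.2) ∧ F q.2 < F q.1)).card
      + (P.filter (fun q => (q.1.1 = q.2.1 + 1 ∧ q.2.2 < q.1.2) ∧ F q.2 < F q.1)).card := by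
    have hsplit : InvSet μ F
        = P.filter (fun q => ((q.1.1 = q.2.1 ∧ q.1.2 < q.2.2) ∧ F q.2 < F q.1) ∨
            ((q.1.1 = q.2.1 + 1 ∧ q.2.2 < q.1.2) ∧ F q.2 < F q.1)) := by
      rw [InvSet]
      exact Finset.filter_congr (fun q _ => by tauto)
    rw [hsplit, Finset.filter_or]
    apply Finset.card_union_of_disjoint
    rw [Finset.disjoint_left]
    rintro q hq1 hq2
    simp only [Finset.mem_filter] at hq1 hq2
    omega
  -- shift the adjacent-row inversions up a row
  have h5 : (P.filter (fun q => (q.1.1 = q.2.1 + 1 ∧ q.2.2 < q.1.2) ∧ F q.2 < F q.1)).card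
      = (P.filter (fun q => (q.1.1 = q.2.1 ∧ q.1.2 < q.2.2) ∧
          (q.2.1 + 1, q.2.2) ∈ μ.cells ∧ F q.1 < F (q.2.1 + 1, q.2.2))).card := by
    apply Finset.card_nbij' (fun q => (q.2, (q.1.1 - 1, q.1.2)))
      (fun q => ((q.2.1 + 1, q.2.2), q.1))
    · rintro ⟨⟨a, b⟩, ⟨c, d⟩⟩ (hq : _ ∈ (_ : Finset _))
      show _ ∈ (_ : Finset _)
      simp only [Finset.mem_filter, Finset.mem_product, YoungDiagram.mem_cells, hP] at hq ⊢
      obtain ⟨⟨m1, m2⟩, ⟨hr, hcol⟩, hlt⟩ := hq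
      rw [show a - 1 = c from by omega]
      refine ⟨⟨m2, μ.up_left_mem (by omega) le_rfl m1⟩, ⟨rfl, hcol⟩, ?_, ?_⟩
      · rw [show c + 1 = a from by omega]; exact m1
      · rw [show ((c + 1 : ℕ), b) = ((a : ℕ), b) from by rw [show c + 1 = a from by omega]]
        exact hlt
    · rintro ⟨⟨a, b⟩, ⟨c, d⟩⟩ (hq : _ ∈ (_ : Finset _))
      show _ ∈ (_ : Finset _)
      simp only [Finset.mem_filter, Finset.mem_product, YoungDiagram.mem_cells, hP] at hq ⊢
      obtain ⟨⟨m1, m2⟩, ⟨hr, hcol⟩, hm, hlt⟩ := hq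
      exact ⟨⟨hm, m1⟩, ⟨by omega, hcol⟩, hlt⟩
    · rintro ⟨⟨a, b⟩, ⟨c, d⟩⟩ (hq : _ ∈ (_ : Finset _))
      simp only [Finset.mem_filter, Finset.mem_product, hP] at hq
      obtain ⟨_, ⟨hr, _⟩, _⟩ := hq
      simp only [Prod.mk.injEq, and_true, true_and]
      omega
    · rintro ⟨⟨a, b⟩, ⟨c, d⟩⟩ _
      simp
  rw [h1, h2, h3, h4, h5]
  -- now a pointwise identity over P
  rw [Finset.card_filter, Finset.card_filter, Finset.card_filter, Finset.card_filter,
    ← Finset.sum_add_distrib, ← Finset.sum_add_distrib]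
  refine Finset.sum_congr rfl fun q hq => ?_
  have hq2 : q.2 ∈ μ.cells := (Finset.mem_product.mp hq).2
  have hF : (q.2.1 + 1, q.2.2) ∈ μ.cells → F q.2 < F (q.2.1 + 1, q.2.2) := by
    intro hm
    have := hcs q.2.1 q.2.2 hm
    simpa using this
  by_cases hm : (q.2.1 + 1, q.2.2) ∈ μ.cells
  · have hFy := hF hm
    simp only [hm, true_and, and_true, true_implies]
    split_ifs <;> omega
  · simp only [hm, false_and, and_false, false_implies, and_true, if_false]
    split_ifs <;> omega

/-- downward induction producing a contradiction from a row descent when all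
`zbcount`s vanish -/
lemma no_descent (μ : YoungDiagram) (F : ℕ × ℕ → ℕ)
    (hcs : ∀ i j : ℕ, (i + 1, j) ∈ μ.cells → F (i, j) < F (i + 1, j))
    (hz : ∀ c ∈ μ.cells, zbcount μ F c = 0) :
    ∀ d i j, μ.colLen (j + 1) - i ≤ d → (i, j + 1) ∈ μ.cells →
      F (i, j + 1) < F (i, j) → False := by
  intro d
  induction d with
  | zero =>
      intro i j hd hm _
      rw [YoungDiagram.mem_cells, YoungDiagram.mem_iff_lt_colLen] at hm
      omega
  | succ d ih =>
      intro i j hd hm hlt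
      have hc : (i, j) ∈ μ.cells := by
        rw [YoungDiagram.mem_cells] at hm ⊢
        exact μ.up_left_mem le_rfl (by omega) hm
      have hz0 := hz (i, j) hc
      rw [zbcount, Finset.card_eq_zero, Finset.filter_eq_empty_iff] at hz0
      by_cases hb : (i + 1, j + 1) ∈ μ.cells ∧ F (i + 1, j + 1) ≤ F (i, j)
      case neg =>
        exact hz0 hm ⟨rfl, Nat.lt_succ_self j, hlt, fun hmm => by
          by_contra hle
          exact hb ⟨hmm, Nat.le_of_not_lt hle⟩⟩
      obtain ⟨hbm, hble⟩ := hb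
      -- descent in row i+1
      have h2 : F (i + 1, j + 1) < F (i + 1, j) := by
        have := hcs i j (by
          rw [YoungDiagram.mem_cells] at hbm ⊢
          exact μ.up_left_mem le_rfl (by omega) hbm)
        omega
      have hcol : i + 1 < μ.colLen (j + 1) := by
        rw [YoungDiagram.mem_cells, YoungDiagram.mem_iff_lt_colLen] at hbm
        exact hbm
      exact ih (i + 1) j (by omega) hbm h2

lemma row_mono (μ : YoungDiagram) (F : ℕ × ℕ → ℕ)
    (h : ∀ c ∈ μ.cells, (c.1, c.2 + 1) ∈ μ.cells → F c ≤ F (c.1, c.2 + 1)) :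
    ∀ i j k, j ≤ k → (i, k) ∈ μ.cells → F (i, j) ≤ F (i, k) := by
  intro i j k hjk
  induction k with
  | zero =>
      intro hm
      have : j = 0 := by omega
      simp [this]
  | succ k ih =>
      intro hm
      rcases Nat.lt_or_ge j (k + 1) with hlt | hge
      · have hk : (i, k) ∈ μ.cells := by
          rw [YoungDiagram.mem_cells] at hm ⊢
          exact μ.up_left_mem le_rfl (by omega) hm
        have hstep : F (i, k) ≤ F (i, k + 1) := h (i, k) hk hm
        have h2 := ih (by omega) hk
        omega
      · have : j = k + 1 := by omega
        simp [this]

/-- For a column-strict filling `F` of partition shape,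
`Σ_{c ∈ dg(λ)} z̄count(c, F) = inv(F) = |Inv(F)| − Σ_{u ∈ Des(F)} arm(u)`;
moreover `z̄count(c, F) = 0` for all `c` iff `F = rsort(F)`, i.e. the rows of
`F` are weakly increasing. -/
theorem stmt18 (n : ℕ) (μ : YoungDiagram) (F : ℕ × ℕ → ℕ)
    (hn : ∀ c ∈ μ.cells, 1 ≤ F c ∧ F c ≤ n)
    (hcs : ∀ i j : ℕ, (i + 1, j) ∈ μ.cells → F (i, j) < F (i + 1, j)) :
    ((∑ c ∈ μ.cells, (zbcount μ F c : ℤ)) =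
      ((InvSet μ F).card : ℤ) - ∑ u ∈ Des μ F, (arm μ u : ℤ)) ∧
    ((∀ c ∈ μ.cells, zbcount μ F c = 0) ↔
      (∀ c ∈ μ.cells, (c.1, c.2 + 1) ∈ μ.cells → F c ≤ F (c.1, c.2 + 1))) := by
  constructor
  · have h := main_nat μ F hcs
    have := congrArg (Nat.cast : ℕ → ℤ) h
    push_cast at this
    linarith
  · constructor
    · intro hz
      rintro ⟨i, j⟩ hc hnext
      by_contra hlt
      push_neg at hlt
      exact no_descent μ F hcs hz (μ.colLen (j + 1)) i j (by omega) hnext hlt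
    · intro h c hc
      rw [zbcount, Finset.card_eq_zero, Finset.filter_eq_empty_iff]
      intro x hx
      simp only [not_and]
      intro h1 h2 h3
      have hx' : (c.1, x.2) ∈ μ.cells := by rwa [← h1, Prod.mk.eta]
      have h4 : F c ≤ F (c.1, x.2) := row_mono μ F h c.1 c.2 x.2 (le_of_lt h2) hx'
      have hxe : ((c.1 : ℕ), x.2) = x := by rw [← h1]
      rw [hxe] at h4
      omega

end Stmt18
end

section
/- Let F be a column-strict filling of partition shape λ with entries in [n], and let F† be the filling of column-composition shape obtained by deleting the cells of F containing n. Then applying any sequence of elementary splice operations to adjacent columns (σ^(j), σ^(j+1)) with len(σ^(j+1)) > len(σ^(j)) until the shape becomes a partition produces the same column-strict filling dsplice(F), independent of the choices made; and the shape μ of dsplice(F) interlaces λ, i.e., λ_i ≥ μ_i ≥ λ_{i+1} for all i. -/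
namespace Stmt19

/-- 0-indexed splice point for column tuples `σ` (shorter) and `τ`:
`m − 1`, where `m = max {1 ≤ i ≤ k+1 : σ_{i−1} < τ_i}` with `σ_0 = 0`. -/
def spliceIdx (σ τ : List ℕ) : ℕ :=
  ((Finset.range (σ.length + 1)).filter
    (fun j => (if j = 0 then 0 else σ.getD (j - 1) 0) < τ.getD j 0)).sup id

/-- Elementary splice for `σ` shorter than `τ`: swap suffixes at the splice point. -/
def splicePair (σ τ : List ℕ) : List ℕ × List ℕ :=
  (σ.take (spliceIdx σ τ) ++ τ.drop (spliceIdx σ τ),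
   τ.take (spliceIdx σ τ) ++ σ.drop (spliceIdx σ τ))

/-- The splice operation on an arbitrary pair of column tuples. -/
def splice (p : List ℕ × List ℕ) : List ℕ × List ℕ :=
  if p.1.length < p.2.length then splicePair p.1 p.2
  else if p.2.length < p.1.length then (splicePair p.2 p.1).swap
  else p

/-- One step of the delete-and-splice rectification: pick a (0-indexed) column
`j` whose length is smaller than that of column `j+1`, and apply the elementary
splice to columns `j`, `j+1`. `G` is a filling presented as its list of columns
(each column read top to bottom). -/
def Step (G G' : List (List ℕ)) : Prop :=
  ∃ j, j + 1 < G.length ∧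
    (G.getD j []).length < (G.getD (j + 1) []).length ∧
    G' = (G.set j (splice (G.getD j [], G.getD (j + 1) [])).1).set (j + 1)
          (splice (G.getD j [], G.getD (j + 1) [])).2

/-- The shape is a partition: column lengths weakly decrease left to right. -/
def IsPartitionShape (G : List (List ℕ)) : Prop :=
  ∀ j, j + 1 < G.length → (G.getD (j + 1) []).length ≤ (G.getD j []).length

/-- The length of the `i`-th row (`i` 1-indexed) of the shape with columns `G`. -/
def rowLength (G : List (List ℕ)) (i : ℕ) : ℕ :=
  (G.map List.length).countP (fun m => decide (i ≤ m))


-- helper lemmas about sorted lists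
lemma sorted_lt {l : List ℕ} (hs : l.Pairwise (· < ·)) {i j : ℕ} (hij : i < j)
    (hj : j < l.length) : l[i]'(by omega) < l[j] := by
  exact List.pairwise_iff_getElem.mp hs i j (by omega) hj hij

lemma sorted_le {l : List ℕ} (hs : l.Pairwise (· < ·)) {i j : ℕ} (hij : i ≤ j)
    (hj : j < l.length) : l[i]'(by omega) ≤ l[j] := by
  rcases eq_or_lt_of_le hij with rfl | h
  · exact le_refl _
  · exact le_of_lt (sorted_lt hs h hj)

lemma spliceIdx_le (σ τ : List ℕ) : spliceIdx σ τ ≤ σ.length := by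
  apply Finset.sup_le
  intro j hj
  simp only [Finset.mem_filter, Finset.mem_range] at hj
  simpa [id] using Nat.lt_succ_iff.mp hj.1

lemma spliceIdx_spec (σ τ : List ℕ) (hτ0 : 0 < τ.getD 0 0) :
    (if spliceIdx σ τ = 0 then 0 else σ.getD (spliceIdx σ τ - 1) 0) < τ.getD (spliceIdx σ τ) 0 := by
  have hne : (((Finset.range (σ.length + 1)).filter
      (fun j => (if j = 0 then 0 else σ.getD (j - 1) 0) < τ.getD j 0))).Nonempty := by
    refine ⟨0, ?_⟩
    simp only [Finset.mem_filter, Finset.mem_range, if_pos rfl]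
    exact ⟨Nat.succ_pos _, hτ0⟩
  obtain ⟨i, hi, heq⟩ := Finset.exists_mem_eq_sup _ hne id
  have : spliceIdx σ τ = i := heq
  rw [this]
  simp only [Finset.mem_filter, Finset.mem_range] at hi
  exact hi.2

lemma spliceIdx_max (σ τ : List ℕ) {j : ℕ} (hj : j ≤ σ.length)
    (h : (if j = 0 then 0 else σ.getD (j - 1) 0) < τ.getD j 0) : j ≤ spliceIdx σ τ := by
  have : j ∈ ((Finset.range (σ.length + 1)).filter
      (fun j => (if j = 0 then 0 else σ.getD (j - 1) 0) < τ.getD j 0)) := by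
    simp only [Finset.mem_filter, Finset.mem_range]
    exact ⟨by omega, h⟩
  exact Finset.le_sup (f := id) this

lemma spliceIdx_gt (σ τ : List ℕ) {j : ℕ} (hj : j ≤ σ.length) (hgt : spliceIdx σ τ < j) :
    τ.getD j 0 ≤ σ.getD (j - 1) 0 := by
  by_contra h
  push_neg at h
  have hj0 : j ≠ 0 := by omega
  have := spliceIdx_max σ τ hj (by rw [if_neg hj0]; exact h)
  omega

section SplicePair

variable {σ τ : List ℕ} (hσs : σ.Pairwise (· < ·)) (hτs : τ.Pairwise (· < ·))
  (hlen : σ.length < τ.length) (hτ0 : 0 < τ.getD 0 0)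

include hlen in
lemma splicePair_fst_length : (splicePair σ τ).1.length = τ.length := by
  have h := spliceIdx_le σ τ
  simp only [splicePair, List.length_append, List.length_take, List.length_drop]
  omega

include hlen in
lemma splicePair_snd_length : (splicePair σ τ).2.length = σ.length := by
  have h := spliceIdx_le σ τ
  simp only [splicePair, List.length_append, List.length_take, List.length_drop]
  rw [Nat.min_eq_left (by omega)]
  omega

include hσs hτs hτ0 hlen in
lemma splicePair_fst_sorted : (splicePair σ τ).1.Pairwise (· < ·) := by
  set m := spliceIdx σ τ with hm
  have hmle := spliceIdx_le σ τ
  refine List.pairwise_append.mpr ⟨List.Pairwise.sublist (List.take_sublist _ _) hσs,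
    List.Pairwise.sublist (List.drop_sublist _ _) hτs, ?_⟩
  intro a ha b hb
  obtain ⟨i, hi, rfl⟩ := List.mem_iff_getElem.mp ha
  obtain ⟨jj, hjj, rfl⟩ := List.mem_iff_getElem.mp hb
  rw [List.length_take] at hi
  rw [List.length_drop] at hjj
  have him : i < m := lt_of_lt_of_le hi (min_le_left _ _)
  have hiσ : i < σ.length := lt_of_lt_of_le hi (min_le_right _ _)
  rw [List.getElem_take, List.getElem_drop]
  have hC := spliceIdx_spec σ τ hτ0
  rw [if_neg (by omega : m ≠ 0)] at hC
  rw [List.getD_eq_getElem _ _ (by omega : m - 1 < σ.length),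
    List.getD_eq_getElem _ _ (by omega : m < τ.length)] at hC
  calc σ[i] ≤ σ[m-1]'(by omega) := sorted_le hσs (by omega) (by omega)
    _ < τ[m]'(by omega) := hC
    _ ≤ τ[m + jj] := sorted_le hτs (by omega) (by omega)

include hσs hτs hlen in
lemma splicePair_snd_sorted : (splicePair σ τ).2.Pairwise (· < ·) := by
  set m := spliceIdx σ τ with hm
  have hmle := spliceIdx_le σ τ
  refine List.pairwise_append.mpr ⟨List.Pairwise.sublist (List.take_sublist _ _) hτs,
    List.Pairwise.sublist (List.drop_sublist _ _) hσs, ?_⟩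
  intro a ha b hb
  obtain ⟨i, hi, rfl⟩ := List.mem_iff_getElem.mp ha
  obtain ⟨jj, hjj, rfl⟩ := List.mem_iff_getElem.mp hb
  rw [List.length_take] at hi
  rw [List.length_drop] at hjj
  have him : i < m := lt_of_lt_of_le hi (min_le_left _ _)
  have hmσ : m < σ.length := by omega
  rw [List.getElem_take, List.getElem_drop]
  have hgt := spliceIdx_gt σ τ (j := m + 1) (by omega) (by omega)
  rw [List.getD_eq_getElem _ _ (by omega : m + 1 < τ.length),
    show m + 1 - 1 = m from rfl,
    List.getD_eq_getElem _ _ (by omega : m < σ.length)] at hgt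
  calc τ[i]'(by omega) < τ[m+1]'(by omega) := sorted_lt hτs (by omega) (by omega)
    _ ≤ σ[m] := hgt
    _ ≤ σ[m + jj] := sorted_le hσs (by omega) (by omega)

lemma splicePair_fst_mem {x : ℕ} (hx : x ∈ (splicePair σ τ).1) : x ∈ σ ∨ x ∈ τ := by
  rcases List.mem_append.mp hx with h | h
  · exact Or.inl (List.Sublist.mem h (List.take_sublist _ _))
  · exact Or.inr (List.Sublist.mem h (List.drop_sublist _ _))

lemma splicePair_snd_mem {x : ℕ} (hx : x ∈ (splicePair σ τ).2) : x ∈ σ ∨ x ∈ τ := by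
  rcases List.mem_append.mp hx with h | h
  · exact Or.inr (List.Sublist.mem h (List.take_sublist _ _))
  · exact Or.inl (List.Sublist.mem h (List.drop_sublist _ _))

include hlen in
lemma splice_eq : splice (σ, τ) = splicePair σ τ := by
  simp [splice, hlen]

end SplicePair


/-- The key invariant: same number of columns as `F`, column lengths within 1 of
those of `F`, and columns strictly increasing with entries in `[1, n-1]`. -/
def Inv (F : List (List ℕ)) (n : ℕ) (G : List (List ℕ)) : Prop :=
  G.length = F.length ∧
  (∀ j, (F.getD j []).length - 1 ≤ (G.getD j []).length ∧
      (G.getD j []).length ≤ (F.getD j []).length) ∧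
  (∀ col ∈ G, col.Pairwise (· < ·) ∧ ∀ x ∈ col, 1 ≤ x ∧ x ≤ n - 1)

-- getD/set lemmas
lemma getD_set_self (l : List (List ℕ)) {i : ℕ} (a : List ℕ) (h : i < l.length) :
    (l.set i a).getD i [] = a := by
  rw [List.getD_eq_getElem _ _ (by simpa using h)]
  simp [h]

lemma getD_set_ne (l : List (List ℕ)) {i j : ℕ} (a : List ℕ) (h : i ≠ j) :
    (l.set i a).getD j [] = l.getD j [] := by
  simp [List.getD, List.getElem?_set_ne h]

lemma getD_mem (l : List (List ℕ)) {j : ℕ} (h : j < l.length) : l.getD j [] ∈ l := by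
  rw [List.getD_eq_getElem _ _ h]
  exact List.getElem_mem h

/-- The result of the elementary splice step at column `j`. -/
def stepAt (G : List (List ℕ)) (j : ℕ) : List (List ℕ) :=
  (G.set j (splice (G.getD j [], G.getD (j + 1) [])).1).set (j + 1)
    (splice (G.getD j [], G.getD (j + 1) [])).2

lemma step_iff {G G' : List (List ℕ)} : Step G G' ↔ ∃ j, j + 1 < G.length ∧
    (G.getD j []).length < (G.getD (j + 1) []).length ∧ G' = stepAt G j := Iff.rfl

lemma stepAt_length (G : List (List ℕ)) (j : ℕ) : (stepAt G j).length = G.length := by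
  simp [stepAt]

lemma stepAt_getD_left (G : List (List ℕ)) {j : ℕ} (hj : j + 1 < G.length) :
    (stepAt G j).getD j [] = (splice (G.getD j [], G.getD (j + 1) [])).1 := by
  rw [stepAt, getD_set_ne _ _ (by omega), getD_set_self _ _ (by omega)]

lemma stepAt_getD_right (G : List (List ℕ)) {j : ℕ} (hj : j + 1 < G.length) :
    (stepAt G j).getD (j + 1) [] = (splice (G.getD j [], G.getD (j + 1) [])).2 := by
  rw [stepAt, getD_set_self _ _ (by simpa using hj)]

lemma stepAt_getD_other (G : List (List ℕ)) {j i : ℕ} (h1 : i ≠ j) (h2 : i ≠ j + 1) :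
    (stepAt G j).getD i [] = G.getD i [] := by
  rw [stepAt, getD_set_ne _ _ (fun h => h2 h.symm), getD_set_ne _ _ (fun h => h1 h.symm)]

section Anatomy

variable {F : List (List ℕ)} {n : ℕ} {G : List (List ℕ)}
  (hshape : IsPartitionShape F) (hG : Inv F n G)

include hshape hG in
lemma step_anatomy {j : ℕ} (hj : j + 1 < G.length)
    (hlt : (G.getD j []).length < (G.getD (j + 1) []).length) :
    (G.getD (j + 1) []).length = (G.getD j []).length + 1 ∧
    (G.getD j []).length + 1 = (F.getD j []).length ∧
    (F.getD (j + 1) []).length = (G.getD j []).length + 1 := by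
  obtain ⟨hL, hB, _⟩ := hG
  have h1 := hB j
  have h2 := hB (j + 1)
  have h3 := hshape j (by omega)
  omega

include hshape hG in
lemma inv_step {G' : List (List ℕ)} (h : Step G G') : Inv F n G' := by
  obtain ⟨j, hj, hlt, rfl⟩ := step_iff.mp h
  obtain ⟨hL, hB, hcols⟩ := hG
  have hσmem : G.getD j [] ∈ G := getD_mem _ (by omega)
  have hτmem : G.getD (j + 1) [] ∈ G := getD_mem _ hj
  obtain ⟨hσs, hσb⟩ := hcols _ hσmem
  obtain ⟨hτs, hτb⟩ := hcols _ hτmem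
  have hτne : G.getD (j + 1) [] ≠ [] := by
    intro h
    rw [h] at hlt
    simp at hlt
  have hτ0 : 0 < (G.getD (j + 1) []).getD 0 0 := by
    have hlen0 : 0 < (G.getD (j + 1) []).length := List.length_pos_iff.mpr hτne
    rw [List.getD_eq_getElem _ _ hlen0]
    exact (hτb _ (List.getElem_mem hlen0)).1
  have hsp : splice (G.getD j [], G.getD (j + 1) []) = splicePair (G.getD j []) (G.getD (j + 1) []) :=
    splice_eq hlt
  have hana := step_anatomy hshape ⟨hL, hB, hcols⟩ hj hlt
  refine ⟨by rw [stepAt_length]; exact hL, ?_, ?_⟩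
  · intro i
    rcases eq_or_ne i j with rfl | hij
    · rw [stepAt_getD_left _ hj, hsp, splicePair_fst_length hlt]
      omega
    · rcases eq_or_ne i (j + 1) with rfl | hij2
      · rw [stepAt_getD_right _ hj, hsp, splicePair_snd_length hlt]
        omega
      · rw [stepAt_getD_other _ hij hij2]
        exact hB i
  · intro col hcol
    rw [stepAt] at hcol
    rcases List.mem_or_eq_of_mem_set hcol with hcol | rfl
    · rcases List.mem_or_eq_of_mem_set hcol with hcol | rfl
      · exact hcols _ hcol
      · rw [hsp]
        exact ⟨splicePair_fst_sorted hσs hτs hlt hτ0,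
          fun x hx => (splicePair_fst_mem hx).elim (hσb x) (hτb x)⟩
    · rw [hsp]
      exact ⟨splicePair_snd_sorted hσs hτs hlt,
        fun x hx => (splicePair_snd_mem hx).elim (hσb x) (hτb x)⟩

end Anatomy

lemma stepAt_comm {G : List (List ℕ)} {j₁ j₂ : ℕ} (hfar : j₁ + 2 ≤ j₂) :
    stepAt (stepAt G j₁) j₂ = stepAt (stepAt G j₂) j₁ := by
  have e1 : (stepAt G j₁).getD j₂ [] = G.getD j₂ [] := stepAt_getD_other G (by omega) (by omega)
  have e2 : (stepAt G j₁).getD (j₂ + 1) [] = G.getD (j₂ + 1) [] :=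
    stepAt_getD_other G (by omega) (by omega)
  have e3 : (stepAt G j₂).getD j₁ [] = G.getD j₁ [] := stepAt_getD_other G (by omega) (by omega)
  have e4 : (stepAt G j₂).getD (j₁ + 1) [] = G.getD (j₁ + 1) [] :=
    stepAt_getD_other G (by omega) (by omega)
  set a := (splice (G.getD j₁ [], G.getD (j₁ + 1) [])).1 with ha
  set b := (splice (G.getD j₁ [], G.getD (j₁ + 1) [])).2 with hb
  set c := (splice (G.getD j₂ [], G.getD (j₂ + 1) [])).1 with hc
  set d := (splice (G.getD j₂ [], G.getD (j₂ + 1) [])).2 with hd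
  have lhs_eq : stepAt (stepAt G j₁) j₂ =
      (((G.set j₁ a).set (j₁ + 1) b).set j₂ c).set (j₂ + 1) d := by
    rw [show stepAt (stepAt G j₁) j₂ =
        ((stepAt G j₁).set j₂ (splice ((stepAt G j₁).getD j₂ [],
          (stepAt G j₁).getD (j₂ + 1) [])).1).set (j₂ + 1)
          (splice ((stepAt G j₁).getD j₂ [], (stepAt G j₁).getD (j₂ + 1) [])).2 from rfl,
       e1, e2]
    rfl
  have rhs_eq : stepAt (stepAt G j₂) j₁ =
      (((G.set j₂ c).set (j₂ + 1) d).set j₁ a).set (j₁ + 1) b := by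
    rw [show stepAt (stepAt G j₂) j₁ =
        ((stepAt G j₂).set j₁ (splice ((stepAt G j₂).getD j₁ [],
          (stepAt G j₂).getD (j₁ + 1) [])).1).set (j₁ + 1)
          (splice ((stepAt G j₂).getD j₁ [], (stepAt G j₂).getD (j₁ + 1) [])).2 from rfl,
       e3, e4]
    rfl
  rw [lhs_eq, rhs_eq]
  calc (((G.set j₁ a).set (j₁ + 1) b).set j₂ c).set (j₂ + 1) d
      = (((G.set j₁ a).set j₂ c).set (j₁ + 1) b).set (j₂ + 1) d := by
        rw [List.set_comm b c (by omega)]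
    _ = (((G.set j₂ c).set j₁ a).set (j₁ + 1) b).set (j₂ + 1) d := by
        rw [List.set_comm a c (l := G) (by omega)]
    _ = (((G.set j₂ c).set j₁ a).set (j₂ + 1) d).set (j₁ + 1) b := by
        rw [List.set_comm b d (by omega)]
    _ = (((G.set j₂ c).set (j₂ + 1) d).set j₁ a).set (j₁ + 1) b := by
        rw [List.set_comm a d (by omega)]

lemma step_stepAt_far {G : List (List ℕ)} {j₁ j₂ : ℕ} (hfar : j₁ + 2 ≤ j₂)
    (hj₂ : j₂ + 1 < G.length)
    (hlt₂ : (G.getD j₂ []).length < (G.getD (j₂ + 1) []).length) :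
    Step (stepAt G j₁) (stepAt (stepAt G j₁) j₂) := by
  have e1 : (stepAt G j₁).getD j₂ [] = G.getD j₂ [] := stepAt_getD_other G (by omega) (by omega)
  have e2 : (stepAt G j₁).getD (j₂ + 1) [] = G.getD (j₂ + 1) [] :=
    stepAt_getD_other G (by omega) (by omega)
  exact step_iff.mpr ⟨j₂, by rw [stepAt_length]; exact hj₂, by rw [e1, e2]; exact hlt₂, rfl⟩

lemma step_stepAt_far' {G : List (List ℕ)} {j₁ j₂ : ℕ} (hfar : j₂ + 2 ≤ j₁)
    (hj₂ : j₂ + 1 < G.length)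
    (hlt₂ : (G.getD j₂ []).length < (G.getD (j₂ + 1) []).length) :
    Step (stepAt G j₁) (stepAt (stepAt G j₁) j₂) := by
  have e1 : (stepAt G j₁).getD j₂ [] = G.getD j₂ [] := stepAt_getD_other G (by omega) (by omega)
  have e2 : (stepAt G j₁).getD (j₂ + 1) [] = G.getD (j₂ + 1) [] :=
    stepAt_getD_other G (by omega) (by omega)
  exact step_iff.mpr ⟨j₂, by rw [stepAt_length]; exact hj₂, by rw [e1, e2]; exact hlt₂, rfl⟩

lemma diamond {F : List (List ℕ)} {n : ℕ} {G G₁ G₂ : List (List ℕ)}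
    (hshape : IsPartitionShape F) (hG : Inv F n G) (h1 : Step G G₁) (h2 : Step G G₂) :
    G₁ = G₂ ∨ ∃ d, Step G₁ d ∧ Step G₂ d := by
  obtain ⟨j₁, hj₁, hlt₁, rfl⟩ := step_iff.mp h1
  obtain ⟨j₂, hj₂, hlt₂, rfl⟩ := step_iff.mp h2
  rcases eq_or_ne j₁ j₂ with rfl | hne
  · exact Or.inl rfl
  right
  have hana₁ := step_anatomy hshape hG hj₁ hlt₁
  have hana₂ := step_anatomy hshape hG hj₂ hlt₂
  have hfar : j₁ + 2 ≤ j₂ ∨ j₂ + 2 ≤ j₁ := by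
    rcases (by omega : j₂ = j₁ + 1 ∨ j₁ = j₂ + 1 ∨ j₁ + 2 ≤ j₂ ∨ j₂ + 2 ≤ j₁) with h | h | h | h
    · exfalso; subst h; omega
    · exfalso; subst h; omega
    · exact Or.inl h
    · exact Or.inr h
  rcases hfar with hfar | hfar
  · refine ⟨stepAt (stepAt G j₁) j₂, step_stepAt_far hfar hj₂ hlt₂, ?_⟩
    rw [stepAt_comm hfar]
    exact step_stepAt_far' (by omega) hj₁ hlt₁
  · refine ⟨stepAt (stepAt G j₁) j₂, step_stepAt_far' hfar hj₂ hlt₂, ?_⟩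
    rw [← stepAt_comm hfar]
    exact step_stepAt_far hfar hj₁ hlt₁

lemma partition_no_step {G G' : List (List ℕ)} (hG : IsPartitionShape G) : ¬ Step G G' := by
  rintro ⟨j, hj, hlt, -⟩
  exact absurd (hG j hj) (not_le.mpr hlt)

lemma rtg_of_partition {G X : List (List ℕ)} (hG : IsPartitionShape G)
    (h : Relation.ReflTransGen Step G X) : X = G := by
  rcases h.cases_head with h | ⟨c, hc, -⟩
  · exact h.symm
  · exact absurd hc (partition_no_step hG)

lemma countP_mono_on {L M : List ℕ} (h : L.length = M.length) {p q : ℕ → Bool}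
    (hpq : ∀ i (hi : i < L.length), p L[i] = true → q (M[i]'(h ▸ hi)) = true) :
    L.countP p ≤ M.countP q := by
  induction L generalizing M with
  | nil => simp
  | cons a L ih =>
    cases M with
    | nil => simp at h
    | cons b M =>
      simp only [List.countP_cons]
      have h0 := hpq 0 (by simp)
      simp only [List.getElem_cons_zero] at h0
      have hrec := ih (M := M) (by simpa using h)
        (fun i hi hp => by
          have := hpq (i + 1) (by simpa using Nat.succ_lt_succ hi)
            (by simpa using hp)
          simpa using this)
      by_cases hpa : p a = true <;> by_cases hqb : q b = true <;>
        simp [hpa, hqb] at * <;> omega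

lemma length_le_filter_ne {c : List ℕ} (hnd : c.Nodup) (n : ℕ) :
    c.length ≤ (c.filter fun x => decide (x ≠ n)).length + 1 := by
  induction c with
  | nil => simp
  | cons a c ih =>
    rw [List.filter_cons]
    by_cases h : a = n
    · subst h
      rw [if_neg (by simp)]
      have hfe : c.filter (fun x => decide (x ≠ a)) = c :=
        List.filter_eq_self.mpr (fun x hx => by
          simp only [decide_eq_true_eq]
          intro hxa
          exact (List.nodup_cons.mp hnd).1 (hxa ▸ hx))
      rw [hfe]
      simp
    · rw [if_pos (by simpa using h)]
      have := ih (List.nodup_cons.mp hnd).2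
      simp only [List.length_cons]
      omega

lemma inv_start {F : List (List ℕ)} {n : ℕ} (hn : 1 ≤ n)
    (hcols : ∀ col ∈ F, col.Pairwise (· < ·) ∧ ∀ x ∈ col, 1 ≤ x ∧ x ≤ n) :
    Inv F n (F.map fun col => col.filter fun x => decide (x ≠ n)) := by
  refine ⟨by simp, ?_, ?_⟩
  · intro j
    by_cases hj : j < F.length
    · have hmap : (F.map fun col => col.filter fun x => decide (x ≠ n)).getD j [] =
          (F.getD j []).filter fun x => decide (x ≠ n) := by
        rw [List.getD_eq_getElem _ _ (by simpa using hj), List.getD_eq_getElem _ _ hj]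
        simp
      rw [hmap]
      have hcol := hcols _ (getD_mem _ hj)
      have hle := List.length_filter_le (fun x => decide (x ≠ n)) (F.getD j [])
      have hge := length_le_filter_ne hcol.1.nodup n
      omega
    · rw [List.getD_eq_default F _ (not_lt.mp hj),
        List.getD_eq_default _ _ (by simpa using not_lt.mp hj)]
      simp
  · intro col hcol
    obtain ⟨c, hc, rfl⟩ := List.mem_map.mp hcol
    obtain ⟨hs, hb⟩ := hcols c hc
    refine ⟨List.Pairwise.sublist List.filter_sublist hs, ?_⟩
    intro x hx
    obtain ⟨hxc, hxn⟩ := List.mem_filter.mp hx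
    have := hb x hxc
    simp only [decide_eq_true_eq] at hxn
    omega

/-- Let `F` be a column-strict filling of partition shape `λ` with entries in
`[n]` (presented as its list of columns), and let `F†` be obtained by deleting
all entries equal to `n`. Then any sequence of elementary splice steps from `F†`
terminating in a partition shape yields the same filling `dsplice(F)`
(independent of choices); it is column strict with entries in `[n−1]`, and its
shape `μ` interlaces `λ`: `λ_i ≥ μ_i ≥ λ_{i+1}` for all `i`. -/
theorem stmt19 (n : ℕ) (hn : 1 ≤ n) (F : List (List ℕ))
    (hcols : ∀ col ∈ F, col.Pairwise (· < ·) ∧ ∀ x ∈ col, 1 ≤ x ∧ x ≤ n)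
    (hshape : IsPartitionShape F) :
    (∀ G G',
      Relation.ReflTransGen Step (F.map (fun col => col.filter (fun x => decide (x ≠ n)))) G →
      Relation.ReflTransGen Step (F.map (fun col => col.filter (fun x => decide (x ≠ n)))) G' →
      IsPartitionShape G → IsPartitionShape G' → G = G') ∧
    (∀ G,
      Relation.ReflTransGen Step (F.map (fun col => col.filter (fun x => decide (x ≠ n)))) G →
      IsPartitionShape G →
      (∀ col ∈ G, col.Pairwise (· < ·) ∧ ∀ x ∈ col, 1 ≤ x ∧ x ≤ n - 1) ∧
      (∀ i, 1 ≤ i → rowLength G i ≤ rowLength F i ∧ rowLength F (i + 1) ≤ rowLength G i)) := by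
  have hstart : Inv F n (F.map fun col => col.filter fun x => decide (x ≠ n)) :=
    inv_start hn hcols
  let R : {G // Inv F n G} → {G // Inv F n G} → Prop := fun a b => Step a.1 b.1
  have hlift : ∀ {G X : List (List ℕ)} (hG : Inv F n G),
      Relation.ReflTransGen Step G X → ∃ hX : Inv F n X,
        Relation.ReflTransGen R ⟨G, hG⟩ ⟨X, hX⟩ := by
    intro G X hG h
    induction h with
    | refl => exact ⟨hG, Relation.ReflTransGen.refl⟩
    | tail _ hstep ih =>
      obtain ⟨hY, hr⟩ := ih
      exact ⟨inv_step hshape hY hstep, hr.tail hstep⟩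
  have hCR : ∀ a b c : {G // Inv F n G}, R a b → R a c →
      ∃ d, Relation.ReflGen R b d ∧ Relation.ReflTransGen R c d := by
    intro a b c hab hac
    rcases diamond hshape a.2 hab hac with heq | ⟨d, hbd, hcd⟩
    · have hbc : b = c := Subtype.ext heq
      subst hbc
      exact ⟨b, Relation.ReflGen.refl, Relation.ReflTransGen.refl⟩
    · have hd : Inv F n d := inv_step hshape b.2 hbd
      exact ⟨⟨d, hd⟩, Relation.ReflGen.single hbd, Relation.ReflTransGen.single hcd⟩
  constructor
  · intro G G' hG hG' hpG hpG'
    obtain ⟨hIG, hrG⟩ := hlift hstart hG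
    obtain ⟨hIG', hrG'⟩ := hlift hstart hG'
    obtain ⟨c, hc1, hc2⟩ := Relation.church_rosser hCR hrG hrG'
    have p1 : Relation.ReflTransGen Step G c.1 :=
      Relation.ReflTransGen.lift (r := R) (p := Step) Subtype.val (fun a b h => h) _ _ hc1
    have p2 : Relation.ReflTransGen Step G' c.1 :=
      Relation.ReflTransGen.lift (r := R) (p := Step) Subtype.val (fun a b h => h) _ _ hc2
    rw [← rtg_of_partition hpG p1, ← rtg_of_partition hpG' p2]
  · intro G hG hpG
    obtain ⟨hIG, -⟩ := hlift hstart hG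
    refine ⟨hIG.2.2, ?_⟩
    intro i _
    simp only [rowLength]
    have hL : (G.map List.length).length = (F.map List.length).length := by simp [hIG.1]
    constructor
    · apply countP_mono_on hL
      intro j hj hp
      simp only [List.length_map] at hj
      have hjF : j < F.length := by rw [← hIG.1]; exact hj
      rw [List.getElem_map] at hp ⊢
      simp only [decide_eq_true_eq] at hp ⊢
      have hb := (hIG.2.1 j).2
      rw [List.getD_eq_getElem _ _ hj, List.getD_eq_getElem _ _ hjF] at hb
      omega
    · apply countP_mono_on hL.symm
      intro j hj hp
      simp only [List.length_map] at hj
      have hjG : j < G.length := by rw [hIG.1]; exact hj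
      rw [List.getElem_map] at hp ⊢
      simp only [decide_eq_true_eq] at hp ⊢
      have hb := (hIG.2.1 j).1
      rw [List.getD_eq_getElem _ _ hjG, List.getD_eq_getElem _ _ hj] at hb
      omega

end Stmt19
end
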